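/- arXiv:1907.04220 — 4 statements merged into one kernel-verified Lean document; each statement's English description precedes it below -/
import Mathlib

section
/- Let F be a Borel probability distribution on [0,∞)^m whose j-th marginal F_j has mean μ_j > 0 and variance at most σ_j², for j = 1,…,m. Let r_j = σ_j/μ_j, r_max = max_j r_j, and let ρ be the function with ρ(r) the unique solution in [1,∞) of (2e^{ρ−1}−1)/ρ² = r² + 1. Then selling the items separately via log-lotteries guarantees a ρ(r_max)-approximation to the optimal revenue: Σ_{j=1}^m REV(P^log_{μ_j,σ_j};F_j) ≥ OPT_m(F)/ρ(r_max). (In particular, OPT_m(F) ≤ Σ_j μ_j.) -/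
open MeasureTheory ENNReal NNReal

/-- Revenue of posting price `p` against valuation distribution `F`:
`REV(p;F) = p · P(X ≥ p)`. -/
noncomputable def rev (F : Measure ℝ) (p : ℝ) : ℝ :=
  p * (F (Set.Ici p)).toReal

/-- Optimal revenue `OPT(F) = sup_{p ≥ 0} p · P(X ≥ p)`. -/
noncomputable def opt (F : Measure ℝ) : ℝ :=
  ⨆ p ∈ Set.Ici (0 : ℝ), rev F p

/-- Revenue of a randomized pricing mechanism `A` (a measure over prices):
`REV(A;F) = E_{p∼A}[REV(p;F)]`. -/
noncomputable def mrev (A F : Measure ℝ) : ℝ :=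
  ∫ p, rev F p ∂A

/-- `F` is a `(μ,σ)`-distributed distribution: a probability measure on `[0,∞)`
with mean `m` and variance at most `s²`. -/
structure MeanVarLe (F : Measure ℝ) (m s : ℝ) : Prop where
  prob : IsProbabilityMeasure F
  supp : F (Set.Iio 0) = 0
  int_mean : Integrable (fun x => x) F
  int_sq : Integrable (fun x => x ^ 2) F
  mean : ∫ x, x ∂F = m
  var_le : ∫ x, (x - m) ^ 2 ∂F ≤ s ^ 2

/-- A randomized pricing mechanism: a probability measure over prices in `[0,∞)`. -/
def IsPriceMech (A : Measure ℝ) : Prop :=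
  IsProbabilityMeasure A ∧ A (Set.Iio 0) = 0

/-- The log-lottery `P^log` with parameters `p1 ≤ p2`: the probability measure supported on
`[p1,p2]` whose cdf on `[p1,p2)` is
`x ↦ (p2·ln(x/p1) − (x−p1)) / (p2·ln(p2/p1) − (p2−p1))`
(for `p1 = p2` this is the point mass at `p1`). -/
structure IsLogLottery (A : Measure ℝ) (p1 p2 : ℝ) : Prop where
  prob : IsProbabilityMeasure A
  supp : A (Set.Icc p1 p2) = 1
  cdf : ∀ x ∈ Set.Ico p1 p2,
    A (Set.Iic x) = ENNReal.ofReal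
      ((p2 * Real.log (x / p1) - (x - p1)) / (p2 * Real.log (p2 / p1) - (p2 - p1)))

/-- A (direct revelation, possibly randomized) truthful selling mechanism for `m` items and
a single additive buyer: an allocation rule `alloc : [0,∞)^m → [0,1]^m` and a payment rule
`pay : [0,∞)^m → [0,∞)` satisfying incentive compatibility and individual rationality. -/
structure TruthfulMech (m : ℕ) where
  alloc : (Fin m → ℝ) → Fin m → ℝ
  pay : (Fin m → ℝ) → ℝ
  alloc_meas : Measurable alloc
  pay_meas : Measurable pay
  alloc_nonneg : ∀ v i, 0 ≤ alloc v i
  alloc_le_one : ∀ v i, alloc v i ≤ 1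
  pay_nonneg : ∀ v, 0 ≤ pay v
  ic : ∀ v w : Fin m → ℝ, (∀ i, 0 ≤ v i) → (∀ i, 0 ≤ w i) →
    (∑ i, alloc w i * v i) - pay w ≤ (∑ i, alloc v i * v i) - pay v
  ir : ∀ v : Fin m → ℝ, (∀ i, 0 ≤ v i) → 0 ≤ (∑ i, alloc v i * v i) - pay v

/-- Expected revenue of a truthful `m`-item mechanism on the joint distribution `F`. -/
noncomputable def mrevM {m : ℕ} (M : TruthfulMech m) (F : Measure (Fin m → ℝ)) : ℝ :=
  ∫ v, M.pay v ∂F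

/-- Optimal revenue `OPT_m(F)`: the supremum of expected revenue over all truthful
mechanisms for `m` items. -/
noncomputable def optM (m : ℕ) (F : Measure (Fin m → ℝ)) : ℝ :=
  ⨆ M : TruthfulMech m, mrevM M F


section Stmt14Aux
lemma exp_aux {u : ℝ} (hu : 0 < u) : 0 < Real.exp u * (u - 1) + 1 := by
  have h := Real.add_one_lt_exp (x := -u) (by linarith)
  have h2 : 1 - u < Real.exp (-u) := by linarith
  have h3 : Real.exp u * (1 - u) < Real.exp u * Real.exp (-u) := by
    rcases le_or_gt (1 - u) 0 with h4 | h4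
    · have : Real.exp u * (1 - u) ≤ 0 := mul_nonpos_of_nonneg_of_nonpos (Real.exp_pos u).le h4
      have : (0:ℝ) < Real.exp u * Real.exp (-u) := by positivity
      linarith
    · exact mul_lt_mul_of_pos_left h2 (Real.exp_pos u)
  rw [← Real.exp_add] at h3
  simp at h3
  nlinarith [Real.exp_pos u]

lemma rho_mono : StrictMonoOn (fun x : ℝ => (2 * Real.exp (x - 1) - 1) / x ^ 2)
    (Set.Ici 1) := by
  have hderiv : ∀ x ∈ interior (Set.Ici (1:ℝ)),
      0 < deriv (fun x : ℝ => (2 * Real.exp (x - 1) - 1) / x ^ 2) x := by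
    intro x hx
    rw [interior_Ici] at hx
    have hx1 : (1:ℝ) < x := hx
    have hx0 : x ≠ 0 := by positivity
    have hd : HasDerivAt (fun x : ℝ => (2 * Real.exp (x - 1) - 1) / x ^ 2)
        ((2 * Real.exp (x - 1) * x ^ 2 - (2 * Real.exp (x - 1) - 1) * (2 * x)) / (x ^ 2) ^ 2)
        x := by
      have h1 : HasDerivAt (fun x : ℝ => 2 * Real.exp (x - 1) - 1)
          (2 * Real.exp (x - 1)) x := by
        have := ((Real.hasDerivAt_exp (x - 1)).comp x
          ((hasDerivAt_id x).sub_const 1)).const_mul 2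
        simpa using this.sub_const 1
      have h2 : HasDerivAt (fun x : ℝ => x ^ 2) (2 * x) x := by
        simpa [mul_comm] using hasDerivAt_pow 2 x
      exact h1.div h2 (by positivity)
    rw [hd.deriv]
    have hnum : 0 < 2 * Real.exp (x - 1) * x ^ 2 - (2 * Real.exp (x - 1) - 1) * (2 * x) := by
      have := exp_aux (u := x - 1) (by linarith)
      nlinarith [Real.exp_pos (x - 1)]
    positivity
  refine strictMonoOn_of_deriv_pos (convex_Ici 1) ?_ hderiv
  refine ContinuousOn.div (by fun_prop) (by fun_prop) ?_
  intro x hx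
  have : (1:ℝ) ≤ x := hx
  positivity

lemma optM_aux {m : ℕ} (μs : Fin m → ℝ) (hμs : ∀ j, 0 < μs j)
    (F : Measure (Fin m → ℝ)) [IsProbabilityMeasure F]
    (hFsupp : F {v | ¬ ∀ i, 0 ≤ v i} = 0)
    (hint : ∀ j, Integrable (fun x : ℝ => x) (F.map (fun v => v j)))
    (hmean : ∀ j, ∫ x, x ∂(F.map (fun v => v j)) = μs j)
    (pay : (Fin m → ℝ) → ℝ)
    (hir : ∀ v : Fin m → ℝ, (∀ i, 0 ≤ v i) → pay v ≤ ∑ i, v i) :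
    ∫ v, pay v ∂F ≤ ∑ j, μs j := by
  have hintj : ∀ j, Integrable (fun v : Fin m → ℝ => v j) F := by
    intro j
    have := (integrable_map_measure (g := fun x : ℝ => x)
      measurable_id.aestronglyMeasurable
      (measurable_pi_apply j).aemeasurable).mp (hint j)
    exact this
  have hintsum : Integrable (fun v : Fin m → ℝ => ∑ j, v j) F :=
    integrable_finset_sum _ (fun j _ => hintj j)
  have hae : ∀ᵐ v ∂F, ∀ i, 0 ≤ v i := by
    rw [ae_iff]; exact hFsupp
  have hsum : ∫ v, (∑ j, v j) ∂F = ∑ j, μs j := by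
    rw [integral_finset_sum _ (fun j _ => hintj j)]
    refine Finset.sum_congr rfl (fun j _ => ?_)
    rw [← hmean j]
    exact (integral_map (φ := fun v : Fin m → ℝ => v j) (f := fun x : ℝ => x)
      (measurable_pi_apply j).aemeasurable
      measurable_id.aestronglyMeasurable).symm
  by_cases hp : Integrable pay F
  · calc ∫ v, pay v ∂F ≤ ∫ v, (∑ j, v j) ∂F := by
          refine integral_mono_ae hp hintsum (hae.mono fun v hv => hir v hv)
      _ = ∑ j, μs j := hsum
  · rw [integral_undef hp]
    exact Finset.sum_nonneg fun j _ => (hμs j).le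

-- dirac identification
lemma eq_dirac_of_singleton (A : Measure ℝ) [IsProbabilityMeasure A] (p : ℝ)
    (h : A {p} = 1) : A = Measure.dirac p := by
  ext s hs
  rw [Measure.dirac_apply' _ hs]
  by_cases hp : p ∈ s
  · have h1 : A s ≤ 1 := prob_le_one
    have h2 : (1:ℝ≥0∞) ≤ A s := h ▸ measure_mono (Set.singleton_subset_iff.mpr hp)
    rw [Set.indicator_of_mem hp]
    exact le_antisymm h1 h2
  · have hsub : s ⊆ {p}ᶜ := fun x hx => by
      simp only [Set.mem_compl_iff, Set.mem_singleton_iff]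
      rintro rfl; exact hp hx
    have h3 : A {p}ᶜ = 0 := by
      rw [measure_compl (measurableSet_singleton p) (measure_ne_top A _), h]
      simp
    rw [Set.indicator_of_notMem hp]
    exact le_antisymm ((measure_mono hsub).trans h3.le) zero_le

lemma Zpos {a b : ℝ} (ha : 0 < a) (hab : a < b) :
    0 < b * Real.log (b / a) - (b - a) := by
  have hb : 0 < b := lt_trans ha hab
  have h1 : Real.log (a / b) < a / b - 1 :=
    Real.log_lt_sub_one_of_pos (by positivity) (by
      intro h
      have : a = b := by field_simp at h; linarith
      linarith)
  rw [Real.log_div (by positivity) (by positivity)] at h1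
  have h2 : Real.log (b / a) = Real.log b - Real.log a :=
    Real.log_div (by positivity) (by positivity)
  rw [h2]
  have h3 : (Real.log a - Real.log b) * b < (a / b - 1) * b :=
    mul_lt_mul_of_pos_right h1 hb
  have h4 : (a / b - 1) * b = a - b := by field_simp
  nlinarith [h3]

lemma ftc1 {a b Z y : ℝ} (ha : 0 < a) (hy : a ≤ y) (hZ : Z ≠ 0) :
    ∫ t in a..y, (b - t) / (t * Z) =
      ((b * Real.log y - y) - (b * Real.log a - a)) / Z := by
  have huIcc : Set.uIcc a y = Set.Icc a y := Set.uIcc_of_le hy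
  have hpos : ∀ t ∈ Set.uIcc a y, 0 < t := by
    intro t ht; rw [huIcc, Set.mem_Icc] at ht; linarith [ht.1]
  have hderiv : ∀ t ∈ Set.uIcc a y,
      HasDerivAt (fun t => (b * Real.log t - t) / Z) ((b - t) / (t * Z)) t := by
    intro t ht
    have ht0 : t ≠ 0 := (hpos t ht).ne'
    have h1 : HasDerivAt (fun t : ℝ => b * Real.log t - t) (b * t⁻¹ - 1) t := by
      exact ((Real.hasDerivAt_log ht0).const_mul b).sub (hasDerivAt_id t)
    have h2 := h1.div_const Z
    have h3 : (b - t) / (t * Z) = (b * t⁻¹ - 1) / Z := by field_simp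
    rw [h3]; exact h2
  have hint : IntervalIntegrable (fun t => (b - t) / (t * Z)) volume a y := by
    apply ContinuousOn.intervalIntegrable
    apply ContinuousOn.div (by fun_prop) (by fun_prop)
    intro t ht
    exact mul_ne_zero (hpos t ht).ne' hZ
  rw [intervalIntegral.integral_eq_sub_of_hasDerivAt hderiv hint]
  ring

lemma ftc2 {a b c : ℝ} :
    ∫ t in a..c, (b - t) = b * (c - a) - (c ^ 2 - a ^ 2) / 2 := by
  have hderiv : ∀ t ∈ Set.uIcc a c,
      HasDerivAt (fun t => b * t - t ^ 2 / 2) (b - t) t := by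
    intro t _
    have h1 : HasDerivAt (fun t : ℝ => b * t) b t := by
      simpa using (hasDerivAt_id t).const_mul b
    have h2 : HasDerivAt (fun t : ℝ => t ^ 2 / 2) t t := by
      simpa using (hasDerivAt_pow 2 t).div_const 2
    exact h1.sub h2
  have hint : IntervalIntegrable (fun t : ℝ => b - t) volume a c :=
    (continuous_const.sub continuous_id).intervalIntegrable a c
  rw [intervalIntegral.integral_eq_sub_of_hasDerivAt hderiv hint]
  ring

noncomputable def dens (a b Z : ℝ) : ℝ → ℝ :=
  fun x => (Set.Icc a b).indicator (fun x => (b - x) / (x * Z)) x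

lemma dens_nonneg {a b Z : ℝ} (ha : 0 < a) (hab : a ≤ b) (hZ : 0 < Z) (x : ℝ) :
    0 ≤ dens a b Z x := by
  unfold dens
  by_cases hx : x ∈ Set.Icc a b
  · rw [Set.indicator_of_mem hx]
    rcases Set.mem_Icc.mp hx with ⟨h1, h2⟩
    have hx0 : 0 < x := lt_of_lt_of_le ha h1
    have : 0 ≤ b - x := by linarith
    positivity
  · rw [Set.indicator_of_notMem hx]

lemma dens_meas {a b Z : ℝ} : Measurable fun x => ENNReal.ofReal (dens a b Z x) := by
  apply Measurable.ennreal_ofReal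
  exact Measurable.indicator (by fun_prop) measurableSet_Icc

lemma dens_int {a b Z : ℝ} (ha : 0 < a) (hab : a ≤ b) (hZ : Z ≠ 0) :
    Integrable (dens a b Z) volume := by
  unfold dens
  rw [integrable_indicator_iff measurableSet_Icc]
  apply ContinuousOn.integrableOn_compact isCompact_Icc
  apply ContinuousOn.div (by fun_prop) (by fun_prop)
  intro t ht
  exact mul_ne_zero (lt_of_lt_of_le ha ht.1).ne' hZ

lemma B_Iic_eq {a b Z x : ℝ} (ha : 0 < a) (hab : a < b)
    (hZdef : Z = b * Real.log (b / a) - (b - a)) (hax : a ≤ x) (hxb : x ≤ b) :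
    (volume.withDensity fun p => ENNReal.ofReal (dens a b Z p)) (Set.Iic x)
      = ENNReal.ofReal ((b * Real.log (x / a) - (x - a)) / Z) := by
  have hZ : 0 < Z := hZdef ▸ Zpos ha hab
  rw [withDensity_apply _ measurableSet_Iic]
  rw [← ofReal_integral_eq_lintegral_ofReal
    ((dens_int ha hab.le hZ.ne').integrableOn)
    (Filter.Eventually.of_forall (dens_nonneg ha hab.le hZ))]
  congr 1
  have hinter : Set.Iic x ∩ Set.Icc a b = Set.Icc a x := by
    ext p
    simp only [Set.mem_inter_iff, Set.mem_Iic, Set.mem_Icc]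
    constructor
    · rintro ⟨h1, h2, h3⟩; exact ⟨h2, h1⟩
    · rintro ⟨h1, h2⟩; exact ⟨h2, h1, h2.trans hxb⟩
  simp only [dens]
  rw [setIntegral_indicator measurableSet_Icc, hinter,
    integral_Icc_eq_integral_Ioc, ← intervalIntegral.integral_of_le hax,
    ftc1 ha hax hZ.ne']
  rw [Real.log_div (lt_of_lt_of_le ha hax).ne' ha.ne']
  ring_nf

lemma B_zero_on {a b Z : ℝ} {s : Set ℝ} (hs : MeasurableSet s)
    (h : ∀ p ∈ s, p ∉ Set.Icc a b) :
    (volume.withDensity fun p => ENNReal.ofReal (dens a b Z p)) s = 0 := by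
  rw [withDensity_apply _ hs]
  have : ∀ᵐ p ∂(volume.restrict s), ENNReal.ofReal (dens a b Z p) = 0 := by
    refine (ae_restrict_iff' hs).mpr (Filter.Eventually.of_forall fun p hp => ?_)
    simp [dens, Set.indicator_of_notMem (h p hp)]
  rw [lintegral_congr_ae this]
  simp

lemma lottery_eq_withDensity {A : Measure ℝ} {a b Z : ℝ} (ha : 0 < a) (hab : a < b)
    (hZdef : Z = b * Real.log (b / a) - (b - a))
    (hprob : IsProbabilityMeasure A) (hsupp : A (Set.Icc a b) = 1)
    (hcdf : ∀ x ∈ Set.Ico a b,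
      A (Set.Iic x) = ENNReal.ofReal
        ((b * Real.log (x / a) - (x - a)) / (b * Real.log (b / a) - (b - a)))) :
    A = volume.withDensity fun p => ENNReal.ofReal (dens a b Z p) := by
  have hZ : 0 < Z := hZdef ▸ Zpos ha hab
  have hcompl : A (Set.Icc a b)ᶜ = 0 := by
    rw [measure_compl measurableSet_Icc (measure_ne_top A _), hsupp]
    simp
  have hBb : (volume.withDensity fun p => ENNReal.ofReal (dens a b Z p)) (Set.Iic b) = 1 := by
    rw [B_Iic_eq ha hab hZdef hab.le le_rfl]
    rw [show (b * Real.log (b / a) - (b - a)) / Z = 1 from by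
      rw [hZdef]; exact div_self (Zpos ha hab).ne']
    exact ENNReal.ofReal_one
  apply Measure.ext_of_Iic
  intro x
  rcases lt_or_ge x a with hx | hx
  · have hA0 : A (Set.Iic x) = 0 := by
      apply measure_mono_null _ hcompl
      intro p hp
      exact fun hmem => absurd hmem.1 (not_le.mpr (lt_of_le_of_lt hp hx))
    rw [hA0, B_zero_on measurableSet_Iic]
    intro p hp hmem
    exact absurd hmem.1 (not_le.mpr (lt_of_le_of_lt hp hx))
  · rcases lt_or_ge x b with hxb | hxb
    · rw [hcdf x ⟨hx, hxb⟩, B_Iic_eq ha hab hZdef hx hxb.le, hZdef]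
    · have hA1 : A (Set.Iic x) = 1 := by
        refine le_antisymm prob_le_one ?_
        rw [← hsupp]
        exact measure_mono (fun p hp => hp.2.trans hxb)
      have hsplit : Set.Iic x = Set.Iic b ∪ Set.Ioc b x := by
        ext p; simp only [Set.mem_union, Set.mem_Iic, Set.mem_Ioc]
        constructor
        · intro h
          rcases le_or_gt p b with h2 | h2
          · exact Or.inl h2
          · exact Or.inr ⟨h2, h⟩
        · rintro (h | h)
          · exact h.trans hxb
          · exact h.2
      rw [hA1, hsplit, measure_union _ measurableSet_Ioc, hBb, B_zero_on measurableSet_Ioc]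
      · simp
      · intro p hp hmem
        exact absurd hmem.2 (not_le.mpr hp.1)
      · exact fun s h1 h2 p hp => absurd ((h2 hp).1) (not_lt.mpr (h1 hp))

lemma inner_eq {a b : ℝ} (hab : a ≤ b) (x : ℝ) :
    ∫ p in Set.Icc a b, (b - p) * (Set.Iic x).indicator (fun _ => (1:ℝ)) p =
      b * (max a (min b x) - a) - ((max a (min b x)) ^ 2 - a ^ 2) / 2 := by
  have heq : ∀ p, (b - p) * (Set.Iic x).indicator (fun _ => (1:ℝ)) p
      = (Set.Iic x).indicator (fun p => b - p) p := by
    intro p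
    by_cases hp : p ∈ Set.Iic x
    · simp [Set.indicator_of_mem hp]
    · simp [Set.indicator_of_notMem hp]
  simp_rw [heq]
  rw [setIntegral_indicator measurableSet_Iic]
  have hinter : Set.Icc a b ∩ Set.Iic x = Set.Icc a (min b x) := by
    ext p
    simp only [Set.mem_inter_iff, Set.mem_Icc, Set.mem_Iic, le_min_iff]
    tauto
  rw [hinter]
  rcases lt_or_ge x a with hx | hx
  · have h1 : min b x = x := min_eq_right (hx.le.trans hab)
    have h2 : max a (min b x) = a := by rw [h1]; exact max_eq_left hx.le
    rw [h2, h1, Set.Icc_eq_empty (not_le.mpr hx)]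
    simp
  · have hc : a ≤ min b x := le_min hab hx
    have h2 : max a (min b x) = min b x := max_eq_right hc
    rw [h2, integral_Icc_eq_integral_Ioc, ← intervalIntegral.integral_of_le hc, ftc2]

lemma J_eq {a b : ℝ} (hab : a ≤ b) (G : Measure ℝ) [IsProbabilityMeasure G] :
    ∫ p in Set.Icc a b, (b - p) * (G (Set.Ici p)).toReal =
      ∫ x, (b * (max a (min b x) - a) - ((max a (min b x)) ^ 2 - a ^ 2) / 2) ∂G := by
  haveI : IsFiniteMeasure (volume.restrict (Set.Icc a b)) := by
    constructor
    rw [Measure.restrict_apply_univ, Real.volume_Icc]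
    exact ENNReal.ofReal_lt_top
  have h1 : ∀ p, (G (Set.Ici p)).toReal = ∫ x, (Set.Ici p).indicator (fun _ => (1:ℝ)) x ∂G := by
    intro p
    rw [integral_indicator_const (1:ℝ) measurableSet_Ici]
    simp
    rfl
  have step1 : ∫ p in Set.Icc a b, (b - p) * (G (Set.Ici p)).toReal =
      ∫ p in Set.Icc a b, ∫ x, (b - p) * (Set.Ici p).indicator (fun _ => (1:ℝ)) x ∂G := by
    refine setIntegral_congr_fun measurableSet_Icc (fun p _ => ?_)
    rw [h1 p, ← integral_const_mul]
  rw [step1]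
  have hint : Integrable
      (Function.uncurry fun p x => (b - p) * (Set.Ici p).indicator (fun _ => (1:ℝ)) x)
      ((volume.restrict (Set.Icc a b)).prod G) := by
    have hfun : (Function.uncurry fun p x => (b - p) * (Set.Ici p).indicator (fun _ => (1:ℝ)) x)
        = fun q : ℝ × ℝ => (b - q.1) * ({q : ℝ × ℝ | q.1 ≤ q.2}).indicator (fun _ => (1:ℝ)) q := by
      funext q
      rcases q with ⟨p, x⟩
      by_cases h : p ≤ x
      · simp [Function.uncurry, Set.indicator_of_mem, h, Set.mem_Ici, Set.mem_setOf_eq]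
      · simp [Function.uncurry, Set.indicator_of_notMem, h, Set.mem_Ici, Set.mem_setOf_eq,
          Set.indicator_apply]
    rw [hfun]
    have hmeas : Measurable (fun q : ℝ × ℝ => (b - q.1) *
        ({q : ℝ × ℝ | q.1 ≤ q.2}).indicator (fun _ => (1:ℝ)) q) := by
      apply Measurable.mul
      · exact measurable_const.sub measurable_fst
      · exact Measurable.indicator measurable_const (measurableSet_le measurable_fst measurable_snd)
    apply Integrable.mono' (g := fun _ => |b| + |a|) (integrable_const _)
      hmeas.aestronglyMeasurable
    -- a.e. bound
    have hnull : ((volume.restrict (Set.Icc a b)).prod G) ((Set.Icc a b)ᶜ ×ˢ Set.univ) = 0 := by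
      rw [Measure.prod_prod, Measure.restrict_apply (measurableSet_Icc.compl)]
      simp
    have hae : ∀ᵐ q ∂((volume.restrict (Set.Icc a b)).prod G), q.1 ∈ Set.Icc a b := by
      rw [ae_iff]
      refine measure_mono_null (fun q hq => ?_) hnull
      exact ⟨hq, Set.mem_univ _⟩
    refine hae.mono fun q hq => ?_
    rcases Set.mem_Icc.mp hq with ⟨h1', h2'⟩
    have hb1 : |b - q.1| ≤ |b| + |a| := by
      rw [abs_le]
      have h5 := abs_nonneg a
      have h6 := abs_nonneg b
      have h7 := le_abs_self b
      have h8 := neg_abs_le a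
      constructor <;> linarith
    calc ‖(b - q.1) * ({q : ℝ × ℝ | q.1 ≤ q.2}).indicator (fun _ => (1:ℝ)) q‖
        = |b - q.1| * |({q : ℝ × ℝ | q.1 ≤ q.2}).indicator (fun _ => (1:ℝ)) q| := by
          rw [Real.norm_eq_abs, abs_mul]
      _ ≤ (|b| + |a|) * 1 := by
          apply mul_le_mul hb1 ?_ (abs_nonneg _) (by positivity)
          by_cases h : q ∈ {q : ℝ × ℝ | q.1 ≤ q.2}
          · simp [Set.indicator_of_mem h]
          · simp [Set.indicator_of_notMem h]
      _ = |b| + |a| := mul_one _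
  rw [integral_integral_swap hint]
  have hin : ∀ x : ℝ, (∫ p in Set.Icc a b, (b - p) * (Set.Ici p).indicator (fun _ => (1:ℝ)) x)
      = b * (max a (min b x) - a) - ((max a (min b x)) ^ 2 - a ^ 2) / 2 := by
    intro x
    rw [← inner_eq hab x]
    refine setIntegral_congr_fun measurableSet_Icc (fun p _ => ?_)
    by_cases h : p ≤ x
    · simp [Set.indicator_of_mem, h, Set.mem_Ici, Set.mem_Iic, Set.indicator_apply]
    · simp [h, Set.indicator_apply]
  exact integral_congr_ae (Filter.Eventually.of_forall fun x => hin x)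

lemma var_expand {G : Measure ℝ} [IsProbabilityMeasure G] {mu : ℝ}
    (h1 : Integrable (fun x => x) G) (h2 : Integrable (fun x => x ^ 2) G)
    (hmean : ∫ x, x ∂G = mu) :
    ∫ x, (x - mu) ^ 2 ∂G = (∫ x, x ^ 2 ∂G) - mu ^ 2 := by
  have hexp : (fun x : ℝ => (x - mu) ^ 2) = fun x => (x ^ 2 - 2 * mu * x) + mu ^ 2 := by
    funext x; ring
  have hI1 : Integrable (fun x : ℝ => x ^ 2 - 2 * mu * x) G := by
    exact h2.sub (h1.const_mul (2 * mu))
  have hI2 : Integrable (fun x : ℝ => 2 * mu * x) G := by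
    exact h1.const_mul (2 * mu)
  rw [hexp, integral_add hI1 (integrable_const _), integral_sub h2 hI2,
    integral_const_mul, hmean, integral_const]
  simp [measure_univ]
  ring

lemma single_item (G : Measure ℝ) (mu s : ℝ) (hG : MeanVarLe G mu s) (hmu : 0 < mu)
    (a b : ℝ) (ha : 0 < a) (hab : a ≤ b)
    (e1 : a * (1 + Real.log (b / a)) = mu)
    (e2 : a * (2 * b - a) = mu ^ 2 + s ^ 2)
    (A : Measure ℝ) (hA : IsLogLottery A a b) :
    a ≤ mrev A G := by
  haveI := hG.prob
  haveI := hA.prob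
  have hvar_exp := var_expand hG.int_mean hG.int_sq hG.mean
  have hEx2 : ∫ x, x ^ 2 ∂G ≤ s ^ 2 + mu ^ 2 := by
    have := hG.var_le
    rw [hvar_exp] at this
    linarith
  rcases eq_or_lt_of_le hab with rfl | hab'
  · -- degenerate case b = a
    have hlog : Real.log (a / a) = 0 := by
      rw [div_self ha.ne']; exact Real.log_one
    have hmua : mu = a := by rw [← e1, hlog]; ring
    have hs0 : s ^ 2 = 0 := by nlinarith [e2, hmua]
    have hA1 : A {a} = 1 := by
      have := hA.supp
      rwa [Set.Icc_self] at this
    rw [show mrev A G = rev G a from by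
      rw [mrev, eq_dirac_of_singleton A a hA1, integral_dirac]]
    -- show G (Ici a) = 1
    have hvar0 : ∫ x, (x - mu) ^ 2 ∂G = 0 := by
      refine le_antisymm (hs0 ▸ hG.var_le) (integral_nonneg fun x => by positivity)
    have hint2 : Integrable (fun x => (x - mu) ^ 2) G := by
      have hexp : (fun x : ℝ => (x - mu) ^ 2) = fun x => x ^ 2 - (2 * mu) * x + mu ^ 2 := by
        funext x; ring
      rw [hexp]
      exact (hG.int_sq.sub (hG.int_mean.const_mul (2 * mu))).add (integrable_const _)
    have hae0 : ∀ᵐ x ∂G, (x - mu) ^ 2 = 0 := by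
      have := (integral_eq_zero_iff_of_nonneg (fun x => by positivity) hint2).mp hvar0
      filter_upwards [this] with x hx using hx
    have haeIci : ∀ᵐ x ∂G, x ∈ Set.Ici a := by
      filter_upwards [hae0] with x hx
      have : x = mu := by nlinarith [hx]
      rw [this, hmua]; exact le_refl a
    have hGa : G (Set.Ici a) = 1 := by
      have hcompl : G (Set.Ici a)ᶜ = 0 := ae_iff.mp haeIci
      exact (prob_compl_eq_zero_iff measurableSet_Ici).mp hcompl
    rw [rev, hGa]
    simp
  · -- main case a < b
    set L := Real.log (b / a) with hL
    set Z := b * L - (b - a) with hZdef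
    have hZ : 0 < Z := Zpos ha hab'
    have hAB : A = volume.withDensity fun p => ENNReal.ofReal (dens a b Z p) :=
      lottery_eq_withDensity ha hab' rfl hA.prob hA.supp hA.cdf
    -- rewrite mrev through the density
    have hsm : Measurable fun p => Real.toNNReal (dens a b Z p) := by
      apply Measurable.real_toNNReal
      exact Measurable.indicator (by fun_prop) measurableSet_Icc
    have hwd : mrev A G = ∫ p, Real.toNNReal (dens a b Z p) • rev G p := by
      rw [show mrev A G = ∫ p, rev G p ∂(volume.withDensity
          fun p => ((Real.toNNReal (dens a b Z p) : ℝ≥0) : ℝ≥0∞)) from by rw [mrev, hAB]; rfl]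
      exact integral_withDensity_eq_integral_smul hsm _
    have hsmul : ∀ p, Real.toNNReal (dens a b Z p) • rev G p
        = (Set.Icc a b).indicator (fun p => (b - p) / (p * Z) * rev G p) p := by
      intro p
      rw [NNReal.smul_def, Real.coe_toNNReal _ (dens_nonneg ha hab hZ p)]
      by_cases hp : p ∈ Set.Icc a b
      · rw [Set.indicator_of_mem hp, dens, Set.indicator_of_mem hp, smul_eq_mul]
      · rw [Set.indicator_of_notMem hp, dens, Set.indicator_of_notMem hp, zero_smul]
    have hstep : mrev A G = ∫ p in Set.Icc a b, (b - p) * (G (Set.Ici p)).toReal / Z := by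
      rw [hwd]
      simp_rw [hsmul]
      rw [integral_indicator measurableSet_Icc]
      refine setIntegral_congr_fun measurableSet_Icc (fun p hp => ?_)
      have hp0 : 0 < p := lt_of_lt_of_le ha hp.1
      rw [rev]
      field_simp
    rw [hstep, integral_div, J_eq hab G]
    rw [le_div_iff₀ hZ]
    -- lower bound the integral
    have hq_int : Integrable (fun x : ℝ => b * (x - a) - (x ^ 2 - a ^ 2) / 2) G := by
      exact ((hG.int_mean.sub (integrable_const a)).const_mul b).sub
        ((hG.int_sq.sub (integrable_const (a ^ 2))).div_const 2)
    have hg_cont : Continuous (fun x : ℝ =>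
        b * (max a (min b x) - a) - ((max a (min b x)) ^ 2 - a ^ 2) / 2) := by
      apply Continuous.sub
      · exact continuous_const.mul ((continuous_const.max
          (continuous_const.min continuous_id)).sub continuous_const)
      · exact (((continuous_const.max (continuous_const.min continuous_id)).pow 2).sub
          continuous_const).div_const 2
    have hg_bdd : ∀ x : ℝ,
        ‖b * (max a (min b x) - a) - ((max a (min b x)) ^ 2 - a ^ 2) / 2‖ ≤ b * (b - a) := by
      intro x
      have hc1 : a ≤ max a (min b x) := le_max_left _ _
      have hc2 : max a (min b x) ≤ b := max_le hab (min_le_left _ _)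
      rw [Real.norm_eq_abs, abs_le]
      have hb0 : 0 ≤ b := le_trans ha.le hab
      have h1' : 0 ≤ (max a (min b x) - a) * (2 * b - max a (min b x) - a) :=
        mul_nonneg (by linarith) (by linarith)
      have h2' : 0 ≤ b * (b - max a (min b x)) := mul_nonneg hb0 (by linarith)
      have h3' : 0 ≤ (max a (min b x) - a) * (max a (min b x) + a) :=
        mul_nonneg (by linarith) (by nlinarith)
      constructor
      · nlinarith [h1', mul_nonneg hb0 (show (0:ℝ) ≤ b - a by linarith)]
      · nlinarith [h2', h3']
    have hg_int : Integrable (fun x : ℝ =>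
        b * (max a (min b x) - a) - ((max a (min b x)) ^ 2 - a ^ 2) / 2) G :=
      Integrable.mono' (integrable_const (b * (b - a))) hg_cont.aestronglyMeasurable
        (Filter.Eventually.of_forall hg_bdd)
    have hqg : ∀ x : ℝ, b * (x - a) - (x ^ 2 - a ^ 2) / 2
        ≤ b * (max a (min b x) - a) - ((max a (min b x)) ^ 2 - a ^ 2) / 2 := by
      intro x
      rcases lt_or_ge x a with hx | hx
      · have h1 : min b x = x := min_eq_right (hx.le.trans hab)
        have h2 : max a (min b x) = a := by rw [h1]; exact max_eq_left hx.le
        rw [h2]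
        nlinarith [hx, hab]
      · rcases le_or_gt x b with hxb | hxb
        · have h1 : min b x = x := min_eq_right hxb
          have h2 : max a (min b x) = x := by rw [h1]; exact max_eq_right hx
          rw [h2]
        · have h1 : min b x = b := min_eq_left hxb.le
          have h2 : max a (min b x) = b := by rw [h1]; exact max_eq_right hab
          rw [h2]
          nlinarith [hxb]
    have hmono : ∫ x, (b * (x - a) - (x ^ 2 - a ^ 2) / 2) ∂G
        ≤ ∫ x, (b * (max a (min b x) - a) - ((max a (min b x)) ^ 2 - a ^ 2) / 2) ∂G :=
      integral_mono hq_int hg_int hqg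
    have hI3 : Integrable (fun x : ℝ => b * (x - a)) G := by
      exact (hG.int_mean.sub (integrable_const a)).const_mul b
    have hI4 : Integrable (fun x : ℝ => (x ^ 2 - a ^ 2) / 2) G := by
      exact (hG.int_sq.sub (integrable_const (a ^ 2))).div_const 2
    have hI5 : Integrable (fun x : ℝ => x - a) G := by
      exact hG.int_mean.sub (integrable_const a)
    have hI6 : Integrable (fun x : ℝ => x ^ 2 - a ^ 2) G := by
      exact hG.int_sq.sub (integrable_const (a ^ 2))
    have hqval : ∫ x, (b * (x - a) - (x ^ 2 - a ^ 2) / 2) ∂G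
        = b * (mu - a) - ((∫ x, x ^ 2 ∂G) - a ^ 2) / 2 := by
      rw [integral_sub hI3 hI4, integral_const_mul, integral_div,
        integral_sub hG.int_mean (integrable_const a),
        integral_sub hG.int_sq (integrable_const (a ^ 2)),
        hG.mean, integral_const, integral_const]
      simp [measure_univ]
    have hfinal : a * Z ≤ ∫ x, (b * (x - a) - (x ^ 2 - a ^ 2) / 2) ∂G := by
      rw [hqval]
      have h2' : s ^ 2 + mu ^ 2 = a * (2 * b - a) := by linarith [e2]
      have hkey : b * (mu - a) - ((s ^ 2 + mu ^ 2) - a ^ 2) / 2 = a * Z := by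
        rw [h2', ← e1, hZdef]
        ring
      linarith [hEx2, hkey]
    exact le_trans hfinal hmono

end Stmt14Aux

/-- Let `F` be a Borel probability distribution on `[0,∞)^m` whose `j`-th
marginal has mean `μ_j > 0` and variance at most `σ_j²`; let `r_max = max_j σ_j/μ_j` and
`ρ = ρ(r_max)` the unique solution in `[1,∞)` of `(2e^{ρ−1}−1)/ρ² = r_max² + 1`. Then
selling the items separately via log-lotteries guarantees a `ρ(r_max)`-approximation:
`Σ_j REV(P^log_{μ_j,σ_j};F_j) ≥ OPT_m(F)/ρ(r_max)`; in particular `OPT_m(F) ≤ Σ_j μ_j`. -/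
theorem stmt14 (m : ℕ) (hm : 0 < m) (μs σs : Fin m → ℝ)
    (hμs : ∀ j, 0 < μs j) (hσs : ∀ j, 0 ≤ σs j)
    (F : Measure (Fin m → ℝ)) (hFprob : IsProbabilityMeasure F)
    (hFsupp : F {v | ¬ ∀ i, 0 ≤ v i} = 0)
    (hmarg : ∀ j, MeanVarLe (F.map (fun v => v j)) (μs j) (σs j))
    (rmax : ℝ) (hrmax : IsGreatest (Set.range fun j => σs j / μs j) rmax)
    (ρ : ℝ) (hρ1 : 1 ≤ ρ) (hρ2 : (2 * Real.exp (ρ - 1) - 1) / ρ ^ 2 = rmax ^ 2 + 1)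
    (A : Fin m → Measure ℝ)
    (hA : ∀ j, ∃ p1 p2 : ℝ, 0 < p1 ∧ p1 ≤ p2 ∧
      p1 * (1 + Real.log (p2 / p1)) = μs j ∧
      p1 * (2 * p2 - p1) = (μs j) ^ 2 + (σs j) ^ 2 ∧
      IsLogLottery (A j) p1 p2) :
    optM m F / ρ ≤ (∑ j, mrev (A j) (F.map (fun v => v j))) ∧
    optM m F ≤ ∑ j, μs j := by
  haveI := hFprob
  have hopt : optM m F ≤ ∑ j, μs j := by
    refine Real.iSup_le (fun M => ?_) (Finset.sum_nonneg fun j _ => (hμs j).le)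
    show ∫ v, M.pay v ∂F ≤ ∑ j, μs j
    refine optM_aux μs hμs F hFsupp (fun j => (hmarg j).int_mean)
      (fun j => (hmarg j).mean) M.pay ?_
    intro v hv
    have h1 := M.ir v hv
    have h2 : ∑ i, M.alloc v i * v i ≤ ∑ i, v i :=
      Finset.sum_le_sum fun i _ => by nlinarith [M.alloc_le_one v i, M.alloc_nonneg v i, hv i]
    linarith
  refine ⟨?_, hopt⟩
  have hρpos : (0:ℝ) < ρ := lt_of_lt_of_le one_pos hρ1
  have hmrev : ∀ j, μs j / ρ ≤ mrev (A j) (F.map (fun v => v j)) := by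
    intro j
    obtain ⟨p1, p2, hp1, hp12, e1, e2, hlog⟩ := hA j
    have hbound := single_item (F.map fun v => v j) (μs j) (σs j) (hmarg j) (hμs j)
      p1 p2 hp1 hp12 e1 e2 (A j) hlog
    refine le_trans ?_ hbound
    rw [div_le_iff₀ hρpos]
    set L := Real.log (p2 / p1) with hLdef
    have hL0 : (0:ℝ) ≤ L := Real.log_nonneg (by rw [le_div_iff₀ hp1]; linarith)
    have h1L : (0:ℝ) < 1 + L := by linarith
    have hρj : (1:ℝ) ≤ 1 + L := by linarith
    have hfj : (2 * Real.exp ((1 + L) - 1) - 1) / (1 + L) ^ 2 = (σs j / μs j) ^ 2 + 1 := by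
      rw [show (1 + L) - 1 = L from by ring, hLdef,
        Real.exp_log (div_pos (lt_of_lt_of_le hp1 hp12) hp1)]
      have hstep : (σs j / μs j) ^ 2 + 1 = (μs j ^ 2 + σs j ^ 2) / μs j ^ 2 := by
        rw [div_pow, div_add_one (pow_ne_zero 2 (hμs j).ne'), add_comm]
      rw [hstep, ← e2, ← e1, div_eq_div_iff (pow_ne_zero 2 h1L.ne')
        (pow_ne_zero 2 (mul_pos hp1 h1L).ne')]
      field_simp
    have hle : (σs j / μs j) ^ 2 + 1 ≤ rmax ^ 2 + 1 := by
      have h1 : σs j / μs j ≤ rmax := hrmax.2 ⟨j, rfl⟩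
      have h0 : 0 ≤ σs j / μs j := div_nonneg (hσs j) (hμs j).le
      nlinarith
    have hρjρ : 1 + L ≤ ρ := by
      by_contra hcon
      push_neg at hcon
      have hlt : (2 * Real.exp ((1 + L) - 1) - 1) / (1 + L) ^ 2
          > (2 * Real.exp (ρ - 1) - 1) / ρ ^ 2 :=
        rho_mono (Set.mem_Ici.mpr hρ1) (Set.mem_Ici.mpr hρj) hcon
      rw [hρ2, hfj] at hlt
      linarith
    calc μs j = p1 * (1 + L) := e1.symm
      _ ≤ p1 * ρ := by nlinarith [hp1]
  calc optM m F / ρ ≤ (∑ j, μs j) / ρ := by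
        exact (div_le_div_iff_of_pos_right hρpos).mpr hopt
    _ = ∑ j, μs j / ρ := Finset.sum_div _ _ _
    _ ≤ ∑ j, mrev (A j) (F.map (fun v => v j)) := Finset.sum_le_sum fun j _ => hmrev j
end

section
/- Fix a positive integer m, positive reals r_1,…,r_m, and let r = max_j r_j. Then for every ε > 0 there exist μ_1,…,μ_m > 0 and σ_j = r_j·μ_j such that for every truthful mechanism (x,π) for m items there exists a product Borel probability distribution F = F_1 × ⋯ × F_m on [0,∞)^m, whose j-th marginal F_j has mean μ_j and variance at most σ_j², satisfying OPT_m(F) ≥ (1 − ε + ln(1+r²)) · E_{v∼F}[π(v)]. -/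
open MeasureTheory

open ENNReal


section Aux
variable {α : Type*} [MeasurableSpace α] [MeasurableSingletonClass α]

open Classical in
lemma onePoint_integrable (a : ℝ≥0∞) (ha : a ≠ ⊤) (v₀ : α) (f : α → ℝ) :
    Integrable f (a • Measure.dirac v₀) := by
  constructor
  · refine ⟨fun z => if z = v₀ then f v₀ else 0, ?_, ?_⟩
    · exact (Measurable.ite (measurableSet_eq) measurable_const measurable_const).stronglyMeasurable
    · refine measure_mono_null (s := {z | ¬ f z = (if z = v₀ then f v₀ else 0)})
        (t := ({v₀} : Set α)ᶜ) ?_ ?_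
      · intro z hz
        simp only [Set.mem_setOf_eq] at hz
        simp only [Set.mem_compl_iff, Set.mem_singleton_iff]
        intro h; subst h; simp at hz
      · simp only [Measure.smul_apply, smul_eq_mul]
        rw [Measure.dirac_apply' _ (MeasurableSet.singleton v₀).compl]
        simp
  · rw [hasFiniteIntegral_def, lintegral_smul_measure, lintegral_dirac]
    exact ENNReal.mul_lt_top ha.lt_top ENNReal.coe_lt_top

lemma onePoint_integral (a : ℝ≥0∞) (v₀ : α) (f : α → ℝ) :
    ∫ z, f z ∂(a • Measure.dirac v₀) = a.toReal * f v₀ := by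
  rw [integral_smul_measure, integral_dirac, smul_eq_mul]

lemma twoPoint_integrable (a b : ℝ≥0∞) (ha : a ≠ ⊤) (hb : b ≠ ⊤) (v₀ v₁ : α) (f : α → ℝ) :
    Integrable f (a • Measure.dirac v₀ + b • Measure.dirac v₁) :=
  (onePoint_integrable a ha v₀ f).add_measure (onePoint_integrable b hb v₁ f)

lemma twoPoint_integral (a b : ℝ≥0∞) (ha : a ≠ ⊤) (hb : b ≠ ⊤) (v₀ v₁ : α) (f : α → ℝ) :
    ∫ z, f z ∂(a • Measure.dirac v₀ + b • Measure.dirac v₁)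
      = a.toReal * f v₀ + b.toReal * f v₁ := by
  rw [integral_add_measure (onePoint_integrable a ha v₀ f) (onePoint_integrable b hb v₁ f),
    onePoint_integral, onePoint_integral]

end Aux

lemma pi_twoPoint (m : ℕ) (j₀ : Fin m) (a b : ℝ≥0∞) (hab : a + b = 1) (τ δ : ℝ)
    (Fs : Fin m → Measure ℝ)
    (hFs : Fs = fun j => if j = j₀ then a • Measure.dirac τ + b • Measure.dirac 0
      else Measure.dirac δ) :
    Measure.pi Fs = a • Measure.dirac (fun i => if i = j₀ then τ else δ)
      + b • Measure.dirac (fun i => if i = j₀ then (0:ℝ) else δ) := by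
  classical
  have hprob : IsProbabilityMeasure (Fs j₀) := by
    constructor
    rw [hFs]; simp [hab]
  have hsf : ∀ j, SigmaFinite (Fs j) := by
    intro j
    rcases eq_or_ne j j₀ with h | h
    · subst h; infer_instance
    · rw [hFs]; simp only [if_neg h]; infer_instance
  refine Measure.pi_eq ?_
  intro s hs
  have hmp : MeasurableSet (Set.univ.pi s) := MeasurableSet.univ_pi hs
  have hdir : ∀ (v : Fin m → ℝ), (Measure.dirac v) (Set.univ.pi s)
      = if (∀ i, v i ∈ s i) then 1 else 0 := by
    intro v
    rw [Measure.dirac_apply' _ hmp]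
    by_cases h : ∀ i, v i ∈ s i
    · rw [if_pos h, Set.indicator_of_mem (by simpa using h)]; rfl
    · rw [if_neg h, Set.indicator_of_notMem (by simpa using h)]
  have hrest : ∏ i ∈ Finset.univ.erase j₀, (Fs i) (s i)
      = if (∀ i, i ≠ j₀ → δ ∈ s i) then 1 else 0 := by
    by_cases h : ∀ i, i ≠ j₀ → δ ∈ s i
    · rw [if_pos h]
      apply Finset.prod_eq_one
      intro i hi
      have hij : i ≠ j₀ := (Finset.mem_erase.mp hi).1
      rw [hFs]; simp only [if_neg hij]
      rw [Measure.dirac_apply' _ (hs i), Set.indicator_of_mem (h i hij)]; rfl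
    · rw [if_neg h]
      push_neg at h
      obtain ⟨i, hij, hmem⟩ := h
      apply Finset.prod_eq_zero (Finset.mem_erase.mpr ⟨hij, Finset.mem_univ i⟩)
      rw [hFs]; simp only [if_neg hij]
      rw [Measure.dirac_apply' _ (hs i), Set.indicator_of_notMem hmem]
  have hsplit : ∏ i, (Fs i) (s i) = (Fs j₀) (s j₀) * ∏ i ∈ Finset.univ.erase j₀, (Fs i) (s i) :=
    (Finset.mul_prod_erase _ _ (Finset.mem_univ j₀)).symm
  have hj0 : (Fs j₀) (s j₀) = a * (if τ ∈ s j₀ then 1 else 0) + b * (if (0:ℝ) ∈ s j₀ then 1 else 0) := by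
    rw [hFs]
    simp only [eq_self_iff_true, if_true, Measure.add_apply, Measure.smul_apply, smul_eq_mul,
      Measure.dirac_apply' _ (hs j₀)]
    by_cases h1 : τ ∈ s j₀ <;> by_cases h2 : (0:ℝ) ∈ s j₀ <;>
      simp [Set.indicator_of_mem, Set.indicator_of_notMem, h1, h2]
  have hmem1 : (∀ i, (if i = j₀ then τ else δ) ∈ s i) ↔ (τ ∈ s j₀ ∧ ∀ i, i ≠ j₀ → δ ∈ s i) := by
    constructor
    · intro h; exact ⟨by simpa using h j₀, fun i hi => by simpa [if_neg hi] using h i⟩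
    · rintro ⟨h1, h2⟩ i
      rcases eq_or_ne i j₀ with rfl | hi
      · simpa using h1
      · simpa [if_neg hi] using h2 i hi
  have hmem0 : (∀ i, (if i = j₀ then (0:ℝ) else δ) ∈ s i) ↔ ((0:ℝ) ∈ s j₀ ∧ ∀ i, i ≠ j₀ → δ ∈ s i) := by
    constructor
    · intro h; exact ⟨by simpa using h j₀, fun i hi => by simpa [if_neg hi] using h i⟩
    · rintro ⟨h1, h2⟩ i
      rcases eq_or_ne i j₀ with rfl | hi
      · simpa using h1
      · simpa [if_neg hi] using h2 i hi
  simp only [Measure.add_apply, Measure.smul_apply, smul_eq_mul, hdir, hsplit, hj0, hrest]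
  by_cases h1 : τ ∈ s j₀ <;> by_cases h2 : (0:ℝ) ∈ s j₀ <;>
    by_cases h3 : ∀ i, i ≠ j₀ → δ ∈ s i <;>
    first
      | (simp [hmem1, hmem0, h1, h2, h3, mul_add, add_mul] <;> (try split <;> simp))
      | (split <;> simp [hmem1, hmem0, h1, h2, h3])
      | simp_all [mul_add, add_mul]

lemma exp_neg_le (x : ℝ) (hx : 0 ≤ x) : Real.exp (-x) ≤ 1 - x + x^2 := by
  have h1 : x + 1 ≤ Real.exp x := Real.add_one_le_exp x
  have h2 : Real.exp (-x) = 1 / Real.exp x := by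
    rw [Real.exp_neg]; ring
  rw [h2]
  rw [div_le_iff₀ (Real.exp_pos x)]
  have h3 : 0 ≤ 1 - x + x^2 := by nlinarith [sq_nonneg (2*x - 1)]
  nlinarith [mul_le_mul_of_nonneg_left h1 h3, pow_nonneg hx 3]

lemma key_grid (B : ℝ) (hB : 1 < B) (n : ℕ) (hn : 1 ≤ n) (β : ℝ) (hβ : 0 < β)
    (hcov : 1 ≤ β * (1 + n * (1 - Real.exp (-(Real.log B / n)))))
    (x u : ℝ → ℝ) (hx1 : ∀ s, 1 ≤ s → x s ≤ 1) (hu1 : 0 ≤ u 1)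
    (hsub : ∀ s s', 1 ≤ s → 1 ≤ s' → u s + x s * (s' - s) ≤ u s') :
    ∃ t, t ∈ Set.Icc 1 B ∧ x t * t - u t ≤ β * t := by
  by_contra hcon
  push_neg at hcon
  set L := Real.log B with hL
  have hB0 : (0:ℝ) < B := by linarith
  have hL0 : 0 < L := Real.log_pos hB
  have hn0 : (0:ℝ) < n := by exact_mod_cast hn
  set ρ : ℝ := Real.exp (L / n) with hρ
  have hρ1 : 1 < ρ := by
    rw [hρ]
    have : 0 < L / n := div_pos hL0 hn0
    calc (1:ℝ) = Real.exp 0 := (Real.exp_zero).symm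
    _ < Real.exp (L / n) := Real.exp_lt_exp.mpr this
  have hρ0 : 0 < ρ := by linarith
  have hρn : ρ ^ n = B := by
    rw [hρ, ← Real.exp_nat_mul]
    rw [mul_div_cancel₀ _ (ne_of_gt hn0)]
    exact Real.exp_log hB0
  have htmem : ∀ k, k ≤ n → ρ ^ k ∈ Set.Icc 1 B := by
    intro k hk
    constructor
    · exact one_le_pow₀ (le_of_lt hρ1)
    · rw [← hρn]
      exact pow_le_pow_right₀ (le_of_lt hρ1) hk
  have hstep : ∀ k, k + 1 ≤ n → u (ρ ^ k) / ρ ^ k + β * (1 - ρ⁻¹) ≤ u (ρ ^ (k+1)) / ρ ^ (k+1) := by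
    intro k hk
    set T : ℝ := ρ ^ k with hT
    have hT1 : 1 ≤ T := (htmem k (by omega)).1
    have hT0 : 0 < T := by linarith
    have hT1' : 1 ≤ ρ * T := by nlinarith
    have hstrict := hcon T (htmem k (by omega))
    have hxT : β * T + u T ≤ x T * T := by linarith
    have hs := hsub T (ρ * T) hT1 hT1'
    have h2 : u T + (β * T + u T) * (ρ - 1) ≤ u (ρ * T) := by
      have hfac : (0:ℝ) ≤ ρ - 1 := by linarith
      nlinarith [hs, mul_le_mul_of_nonneg_right hxT hfac]
    have hpow : ρ ^ (k+1) = ρ * T := by rw [hT, pow_succ]; ring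
    have hexpand : (u T + β * (1 - ρ⁻¹) * T) * (ρ * T) = (u T * ρ + β * (ρ - 1) * T) * T := by
      field_simp
    rw [hpow]
    rw [div_add' _ _ _ (ne_of_gt hT0), div_le_div_iff₀ hT0 (by positivity : (0:ℝ) < ρ * T)]
    rw [hexpand]
    nlinarith [mul_le_mul_of_nonneg_right h2 hT0.le]
  have hind : ∀ k, k ≤ n → (k : ℝ) * (β * (1 - ρ⁻¹)) ≤ u (ρ ^ k) / ρ ^ k := by
    intro k
    induction k with
    | zero => intro _; simpa using hu1
    | succ k ih =>
      intro hk
      have h1 := ih (by omega)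
      have h2 := hstep k hk
      push_cast
      linarith
  have hfin := hind n le_rfl
  rw [hρn] at hfin
  have htop := hcon B ⟨le_of_lt hB, le_rfl⟩
  have hxB := hx1 B (by linarith)
  have hub : u B / B < 1 - β := by
    rw [div_lt_iff₀ hB0]
    nlinarith
  have hρinv : ρ⁻¹ = Real.exp (-(L / n)) := by
    rw [hρ, ← Real.exp_neg]
  rw [hρinv] at hfin
  nlinarith [hcov, hfin, hub, hβ]

set_option maxHeartbeats 1000000 in
/-- Fix `m ≥ 1`, positive reals `r_1,…,r_m`, and `r = max_j r_j`. For
every `ε > 0` there are means `μ_1,…,μ_m > 0` (with `σ_j = r_j·μ_j`) such that for every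
truthful mechanism for `m` items there is a product distribution `F = F_1 × ⋯ × F_m` on
`[0,∞)^m`, whose `j`-th marginal has mean `μ_j` and variance at most `σ_j²`, with
`OPT_m(F) ≥ (1 − ε + ln(1+r²)) · E_{v∼F}[π(v)]`. -/
theorem stmt17 (m : ℕ) (hm : 0 < m) (r : Fin m → ℝ) (hr : ∀ j, 0 < r j)
    (rmax : ℝ) (hrmax : IsGreatest (Set.range r) rmax) :
    ∀ ε : ℝ, 0 < ε → ∃ μs : Fin m → ℝ, (∀ j, 0 < μs j) ∧
      ∀ M : TruthfulMech m, ∃ Fs : Fin m → Measure ℝ,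
        (∀ j, MeanVarLe (Fs j) (μs j) (r j * μs j)) ∧
        (1 - ε + Real.log (1 + rmax ^ 2)) * mrevM M (Measure.pi Fs) ≤
          optM m (Measure.pi Fs) := by
  classical
  intro ε hε
  obtain ⟨⟨j₀, hj₀⟩, -⟩ := hrmax
  have hrm0 : 0 < rmax := hj₀ ▸ hr j₀
  obtain ⟨B, hBdef⟩ : ∃ B : ℝ, B = 1 + rmax ^ 2 := ⟨_, rfl⟩
  have hB : 1 < B := by rw [hBdef]; nlinarith
  obtain ⟨L, hLdef⟩ : ∃ L : ℝ, L = Real.log B := ⟨_, rfl⟩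
  have hL0 : 0 < L := hLdef ▸ Real.log_pos hB
  obtain ⟨c, hcdef⟩ : ∃ c : ℝ, c = 1 - ε + L := ⟨_, rfl⟩
  have hcub : c < 1 + L := by rw [hcdef]; linarith
  have hm0 : (0:ℝ) < m := by exact_mod_cast hm
  obtain ⟨δ, hδdef⟩ : ∃ δ : ℝ, δ = min (1/(2*(m:ℝ))) (ε/(4*(m:ℝ)*(1+L)^2)) := ⟨_, rfl⟩
  have hδ0 : 0 < δ := by
    rw [hδdef]
    apply lt_min
    · positivity
    · positivity
  have hδle1 : δ ≤ 1/(2*(m:ℝ)) := le_trans (le_of_eq hδdef) (min_le_left _ _)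
  have hδle2 : δ ≤ ε/(4*(m:ℝ)*(1+L)^2) := le_trans (le_of_eq hδdef) (min_le_right _ _)
  have hδ1 : (m:ℝ) * δ ≤ 1/2 := by
    calc (m:ℝ) * δ ≤ (m:ℝ) * (1/(2*(m:ℝ))) := by nlinarith
    _ = 1/2 := by field_simp
  have hδ2 : 2 * (m:ℝ) * δ ≤ ε/(2*(1+L)^2) := by
    calc 2 * (m:ℝ) * δ ≤ 2 * (m:ℝ) * (ε/(4*(m:ℝ)*(1+L)^2)) := by nlinarith
    _ = ε/(2*(1+L)^2) := by
        field_simp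
        ring
  refine ⟨fun j => if j = j₀ then 1 else δ, ?_, ?_⟩
  · intro j
    dsimp only
    split
    · norm_num
    · exact hδ0
  intro M
  -- the embedding of single values into valuation profiles
  obtain ⟨e, he⟩ : ∃ e : ℝ → Fin m → ℝ, e = fun s i => if i = j₀ then s else δ := ⟨_, rfl⟩
  have hEj : ∀ s : ℝ, e s j₀ = s := by intro s; simp [he]
  have hEo : ∀ (s : ℝ) i, i ≠ j₀ → e s i = δ := by intro s i hi; simp [he, hi]
  have he_nonneg : ∀ s, 0 ≤ s → ∀ i, 0 ≤ e s i := by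
    intro s hs i
    rcases eq_or_ne i j₀ with rfl | hi
    · rw [hEj]; exact hs
    · rw [hEo _ _ hi]; exact hδ0.le
  have hesum : ∀ s, ∑ i, e s i = s + ((m:ℝ) - 1) * δ := by
    intro s
    rw [← Finset.add_sum_erase _ _ (Finset.mem_univ j₀)]
    have h1 : e s j₀ = s := hEj s
    have h2 : ∀ i ∈ Finset.univ.erase j₀, e s i = δ := by
      intro i hi
      exact hEo s i (Finset.mem_erase.mp hi).1
    rw [h1, Finset.sum_congr rfl h2, Finset.sum_const, nsmul_eq_mul,
      Finset.card_erase_of_mem (Finset.mem_univ j₀)]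
    simp [Nat.cast_sub hm]
  have hpayle : ∀ (M' : TruthfulMech m) (v : Fin m → ℝ), (∀ i, 0 ≤ v i) →
      M'.pay v ≤ ∑ i, v i := by
    intro M' v hv
    have h1 := M'.ir v hv
    have h2 : ∑ i, M'.alloc v i * v i ≤ ∑ i, v i := by
      apply Finset.sum_le_sum
      intro i _
      exact mul_le_of_le_one_left (hv i) (M'.alloc_le_one v i)
    linarith
  -- single-item reduction: allocation and utility along e
  obtain ⟨xx, hxx⟩ : ∃ xx : ℝ → ℝ, xx = fun s => M.alloc (e s) j₀ := ⟨_, rfl⟩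
  obtain ⟨uu, huu⟩ : ∃ uu : ℝ → ℝ,
    uu = fun s => (∑ i, M.alloc (e s) i * e s i) - M.pay (e s) := ⟨_, rfl⟩
  have hXX : ∀ s, xx s = M.alloc (e s) j₀ := fun s => by rw [hxx]
  have hUU : ∀ s, uu s = (∑ i, M.alloc (e s) i * e s i) - M.pay (e s) := fun s => by rw [huu]
  have hx1 : ∀ s, 1 ≤ s → xx s ≤ 1 := fun s _ => by
    rw [hXX]; exact M.alloc_le_one (e s) j₀
  have hu_nonneg : ∀ s, 0 ≤ s → 0 ≤ uu s := fun s hs => by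
    rw [hUU]; exact M.ir (e s) (he_nonneg s hs)
  have hsub : ∀ s s', 1 ≤ s → 1 ≤ s' → uu s + xx s * (s' - s) ≤ uu s' := by
    intro s s' hs hs'
    have hic := M.ic (e s') (e s) (he_nonneg s' (by linarith)) (he_nonneg s (by linarith))
    have hkey : ∑ i, M.alloc (e s) i * e s' i
        = (∑ i, M.alloc (e s) i * e s i) + M.alloc (e s) j₀ * (s' - s) := by
      have hterm : ∀ i, M.alloc (e s) i * e s' i
          = M.alloc (e s) i * e s i + (if i = j₀ then M.alloc (e s) j₀ * (s' - s) else 0) := by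
        intro i
        rcases eq_or_ne i j₀ with rfl | hi
        · rw [hEj, hEj, if_pos rfl]; ring
        · rw [hEo _ _ hi, hEo _ _ hi, if_neg hi]; ring
      rw [Finset.sum_congr rfl (fun i _ => hterm i), Finset.sum_add_distrib]
      simp
    rw [hUU s, hUU s', hXX s]
    linarith [hic, hkey]
  -- the two-point distribution parameters, given a price τ
  have main : ∃ τ, τ ∈ Set.Icc 1 B ∧
      c * ((1/τ) * M.pay (e τ) + (1 - 1/τ) * M.pay (e 0)) ≤ 1 := by
    rcases le_or_gt c (1/2) with hc | hc
    · refine ⟨1, ⟨le_rfl, hB.le⟩, ?_⟩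
      have h1 : M.pay (e 1) ≤ 1 + ((m:ℝ) - 1) * δ := by
        have := hpayle M (e 1) (he_nonneg 1 (by norm_num))
        rw [hesum] at this
        exact this
      have h2 : 0 ≤ M.pay (e 1) := M.pay_nonneg _
      have h3 : M.pay (e 1) ≤ 3/2 := by linarith [hδ1, hδ0]
      have h4 : (1/(1:ℝ)) * M.pay (e 1) + (1 - 1/(1:ℝ)) * M.pay (e 0) = M.pay (e 1) := by
        norm_num
      rw [h4]
      linarith [mul_le_mul_of_nonneg_right hc h2, h3]
    · -- main case: use the equal-revenue grid
      obtain ⟨d, hddef⟩ : ∃ d : ℝ, d = 1 - ε/2 + L := ⟨_, rfl⟩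
      have hcd : d = c + ε/2 := by rw [hddef, hcdef]; ring
      have hd2 : 1/2 < d := by rw [hcd]; linarith
      have hdub : d ≤ 1 + L := by rw [hddef]; linarith
      obtain ⟨β, hβdef⟩ : ∃ β : ℝ, β = 1/d := ⟨_, rfl⟩
      have hβ0 : 0 < β := by
        rw [hβdef]
        have : 0 < d := lt_trans one_half_pos hd2
        positivity
      obtain ⟨n, hn1, hnge⟩ : ∃ n : ℕ, 1 ≤ n ∧ 2*L^2/ε ≤ (n:ℝ) := by
        refine ⟨max 1 ⌈2*L^2/ε⌉₊, le_max_left _ _, ?_⟩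
        calc 2*L^2/ε ≤ (⌈2*L^2/ε⌉₊ : ℝ) := Nat.le_ceil _
        _ ≤ _ := Nat.cast_le.mpr (le_max_right _ _)
      have hnn0 : (0:ℝ) < n := by exact_mod_cast hn1
      have hLn : L^2/n ≤ ε/2 := by
        rw [div_le_iff₀ hnn0]
        have : 2*L^2 ≤ ε * n := by
          rw [div_le_iff₀ hε] at hnge
          linarith
        linarith
      have hcov : 1 ≤ β * (1 + n * (1 - Real.exp (-(L / n)))) := by
        have hx0 : 0 ≤ L / n := by positivity
        have h1 : Real.exp (-(L/n)) ≤ 1 - L/n + (L/n)^2 := exp_neg_le _ hx0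
        have h2 : (n:ℝ) * (1 - Real.exp (-(L/n))) ≥ n * (L/n - (L/n)^2) :=
          mul_le_mul_of_nonneg_left (by linarith) hnn0.le
        have h3 : (n:ℝ) * (L/n - (L/n)^2) = L - L^2/n := by
          field_simp
        have h4 : 1 + (n:ℝ) * (1 - Real.exp (-(L/n))) ≥ 1 + L - ε/2 := by
          rw [h3] at h2; linarith
        have h5 : (1:ℝ) + L - ε/2 = d := by rw [hddef]; ring
        rw [hβdef]
        rw [div_mul_eq_mul_div, le_div_iff₀ (lt_trans one_half_pos hd2), one_mul]
        linarith
      rw [hLdef] at hcov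
      obtain ⟨τ, hτmem, hτkey⟩ := key_grid B hB n hn1 β hβ0 hcov xx uu hx1
        (hu_nonneg 1 (by norm_num)) hsub
      have hτ1 : 1 ≤ τ := hτmem.1
      have hτ0 : 0 < τ := by linarith
      refine ⟨τ, hτmem, ?_⟩
      -- bound the payment at e τ
      have hexp : ∑ i, M.alloc (e τ) i * e τ i ≤ xx τ * τ + ((m:ℝ) - 1) * δ := by
        rw [← Finset.add_sum_erase _ _ (Finset.mem_univ j₀)]
        have h1 : M.alloc (e τ) j₀ * e τ j₀ = xx τ * τ := by
          rw [hXX, hEj]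
        have h2 : ∑ i ∈ Finset.univ.erase j₀, M.alloc (e τ) i * e τ i
            ≤ ((m:ℝ) - 1) * δ := by
          have hb : ∀ i ∈ Finset.univ.erase j₀, M.alloc (e τ) i * e τ i ≤ δ := by
            intro i hi
            have hi' : i ≠ j₀ := (Finset.mem_erase.mp hi).1
            rw [hEo _ _ hi']
            exact mul_le_of_le_one_left hδ0.le (M.alloc_le_one (e τ) i)
          calc ∑ i ∈ Finset.univ.erase j₀, M.alloc (e τ) i * e τ i
              ≤ ∑ _i ∈ Finset.univ.erase j₀, δ := Finset.sum_le_sum hb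
          _ = ((m:ℝ) - 1) * δ := by
              rw [Finset.sum_const, nsmul_eq_mul,
                Finset.card_erase_of_mem (Finset.mem_univ j₀)]
              simp [Nat.cast_sub hm]
        linarith
      have hpayτ : M.pay (e τ) ≤ β * τ + (m:ℝ) * δ := by
        have h1 : M.pay (e τ) = (∑ i, M.alloc (e τ) i * e τ i) - uu τ := by
          rw [hUU]; ring
        rw [h1]
        have h2 : xx τ * τ - uu τ ≤ β * τ := hτkey
        linarith [hexp, hδ0]
      have hpay0 : M.pay (e 0) ≤ (m:ℝ) * δ := by
        have := hpayle M (e 0) (he_nonneg 0 le_rfl)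
        rw [hesum] at this
        linarith [hδ0]
      have hpay0' : 0 ≤ M.pay (e 0) := M.pay_nonneg _
      have hpayτ' : 0 ≤ M.pay (e τ) := M.pay_nonneg _
      have hw1 : 0 < 1/τ := by positivity
      have hw1' : 1/τ ≤ 1 := by rw [div_le_one hτ0]; exact hτ1
      have hmrev : (1/τ) * M.pay (e τ) + (1 - 1/τ) * M.pay (e 0) ≤ β + 2*(m:ℝ)*δ := by
        have hA : (1/τ) * M.pay (e τ) ≤ (1/τ) * (β * τ + (m:ℝ)*δ) :=
          mul_le_mul_of_nonneg_left hpayτ hw1.le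
        have hA2 : (1/τ) * (β * τ + (m:ℝ)*δ) = β + (1/τ) * ((m:ℝ)*δ) := by
          field_simp
        have hA3 : (1/τ) * ((m:ℝ)*δ) ≤ (m:ℝ)*δ :=
          mul_le_of_le_one_left (by positivity) hw1'
        have hBt : (1 - 1/τ) * M.pay (e 0) ≤ (m:ℝ)*δ :=
          le_trans (mul_le_of_le_one_left hpay0' (by linarith)) hpay0
        linarith [hA, hA2, hA3, hBt]
      -- β + 2mδ ≤ 1/c
      have hcpos : 0 < c := lt_trans one_half_pos hc
      have hdpos : 0 < d := lt_trans one_half_pos hd2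
      have hgap : β + 2*(m:ℝ)*δ ≤ 1/c := by
        have h1 : 1/c - 1/d = (ε/2)/(c*d) := by
          have hdc : d - c = ε/2 := by rw [hcd]; ring
          rw [div_sub_div _ _ hcpos.ne' hdpos.ne', one_mul, mul_one, hdc]
        have h2 : c * d ≤ (1+L)^2 := by
          have := mul_le_mul hcub.le hdub hdpos.le (by linarith : (0:ℝ) ≤ 1 + L)
          nlinarith [this]
        have hcd0 : 0 < c * d := mul_pos hcpos hdpos
        have h3 : (ε/2)/((1+L)^2) ≤ (ε/2)/(c*d) :=
          div_le_div_of_nonneg_left (by linarith) hcd0 h2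
        have h4 : ε/(2*(1+L)^2) = (ε/2)/((1+L)^2) := (div_div ε 2 ((1+L)^2)).symm
        rw [hβdef]
        rw [h4] at hδ2
        linarith
      calc c * ((1/τ) * M.pay (e τ) + (1 - 1/τ) * M.pay (e 0))
          ≤ c * (β + 2*(m:ℝ)*δ) := by
            apply mul_le_mul_of_nonneg_left hmrev hcpos.le
      _ ≤ c * (1/c) := mul_le_mul_of_nonneg_left hgap hcpos.le
      _ = 1 := by field_simp
  obtain ⟨τ, hτmem, hfinal⟩ := main
  have hτ1 : 1 ≤ τ := hτmem.1
  have hτ0 : 0 < τ := by linarith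
  -- the two-point distributions
  obtain ⟨aE, haE⟩ : ∃ a : ℝ≥0∞, a = ENNReal.ofReal (1/τ) := ⟨_, rfl⟩
  obtain ⟨bE, hbE⟩ : ∃ b : ℝ≥0∞, b = ENNReal.ofReal (1 - 1/τ) := ⟨_, rfl⟩
  have hinv1 : 1/τ ≤ 1 := by rw [div_le_one hτ0]; exact hτ1
  have hinv0 : 0 < 1/τ := by positivity
  have hab : aE + bE = 1 := by
    rw [haE, hbE, ← ENNReal.ofReal_add hinv0.le (by linarith)]
    norm_num
  have haT : aE ≠ ⊤ := haE ▸ ENNReal.ofReal_ne_top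
  have hbT : bE ≠ ⊤ := hbE ▸ ENNReal.ofReal_ne_top
  have haR : aE.toReal = 1/τ := by rw [haE]; exact ENNReal.toReal_ofReal hinv0.le
  have hbR : bE.toReal = 1 - 1/τ := by rw [hbE]; exact ENNReal.toReal_ofReal (by linarith)
  obtain ⟨Fs, hFs⟩ : ∃ Fs : Fin m → Measure ℝ,
    Fs = fun j => if j = j₀ then aE • Measure.dirac τ + bE • Measure.dirac 0
      else Measure.dirac δ := ⟨_, rfl⟩
  have hpi : Measure.pi Fs = aE • Measure.dirac (e τ) + bE • Measure.dirac (e 0) := by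
    have h := pi_twoPoint m j₀ aE bE hab τ δ Fs hFs
    have h1 : (fun i => if i = j₀ then τ else δ) = e τ := by rw [he]
    have h2 : (fun i => if i = j₀ then (0:ℝ) else δ) = e 0 := by rw [he]
    rw [h1, h2] at h
    exact h
  have hint : ∀ f : (Fin m → ℝ) → ℝ, ∫ v, f v ∂(Measure.pi Fs)
      = (1/τ) * f (e τ) + (1 - 1/τ) * f (e 0) := by
    intro f
    rw [hpi, twoPoint_integral aE bE haT hbT, haR, hbR]
  refine ⟨Fs, ?_, ?_⟩
  · -- the marginals have the right mean and variance
    intro j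
    rcases eq_or_ne j j₀ with rfl | hj
    · have hFj : Fs j = aE • Measure.dirac τ + bE • Measure.dirac 0 := by
        rw [hFs]; simp
      simp only [eq_self_iff_true, if_true]
      constructor
      · constructor
        rw [hFj]
        simp only [Measure.add_apply, Measure.smul_apply, smul_eq_mul, measure_univ, mul_one]
        exact hab
      · rw [hFj]
        simp only [Measure.add_apply, Measure.smul_apply, smul_eq_mul]
        rw [Measure.dirac_apply' _ measurableSet_Iio, Measure.dirac_apply' _ measurableSet_Iio]
        rw [Set.indicator_of_notMem (by simp; linarith), Set.indicator_of_notMem (by simp)]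
        simp
      · rw [hFj]; exact twoPoint_integrable aE bE haT hbT _ _ _
      · rw [hFj]; exact twoPoint_integrable aE bE haT hbT _ _ _
      · rw [hFj, twoPoint_integral aE bE haT hbT, haR, hbR]
        field_simp
        ring
      · rw [hFj, twoPoint_integral aE bE haT hbT, haR, hbR]
        have heq : (1/τ) * (τ - 1)^2 + (1 - 1/τ) * ((0:ℝ) - 1)^2 = τ - 1 := by
          field_simp
          ring
        rw [heq, hj₀]
        have hτB : τ ≤ B := hτmem.2
        rw [hBdef] at hτB
        have h7 : (rmax * 1)^2 = rmax^2 := by ring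
        rw [h7]
        linarith
    · have hFj : Fs j = Measure.dirac δ := by
        rw [hFs]; simp [hj]
      simp only [if_neg hj]
      constructor
      · rw [hFj]; infer_instance
      · rw [hFj, Measure.dirac_apply' _ measurableSet_Iio,
          Set.indicator_of_notMem (by simp; linarith)]
      · rw [hFj, show Measure.dirac δ = (1:ℝ≥0∞) • Measure.dirac δ from (one_smul _ _).symm]
        exact onePoint_integrable 1 one_ne_top _ _
      · rw [hFj, show Measure.dirac δ = (1:ℝ≥0∞) • Measure.dirac δ from (one_smul _ _).symm]
        exact onePoint_integrable 1 one_ne_top _ _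
      · rw [hFj, integral_dirac]
      · rw [hFj, integral_dirac]
        simp
        positivity
  · -- revenue comparison
    have hmrev : mrevM M (Measure.pi Fs) = (1/τ) * M.pay (e τ) + (1 - 1/τ) * M.pay (e 0) :=
      hint M.pay
    -- the separate-prices mechanism
    obtain ⟨pr, hpr⟩ : ∃ pr : Fin m → ℝ, pr = e τ := ⟨_, rfl⟩
    have hpr_nonneg : ∀ i, 0 ≤ pr i := hpr ▸ he_nonneg τ (by linarith)
    let M₀ : TruthfulMech m := {
      alloc := fun v i => if pr i ≤ v i then 1 else 0
      pay := fun v => ∑ i, (if pr i ≤ v i then pr i else 0)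
      alloc_meas := by
        apply measurable_pi_lambda
        intro i
        exact Measurable.ite (measurableSet_le measurable_const (measurable_pi_apply i))
          measurable_const measurable_const
      pay_meas := by
        apply Finset.measurable_sum
        intro i _
        exact Measurable.ite (measurableSet_le measurable_const (measurable_pi_apply i))
          measurable_const measurable_const
      alloc_nonneg := by intro v i; split <;> norm_num
      alloc_le_one := by intro v i; split <;> norm_num
      pay_nonneg := by
        intro v
        apply Finset.sum_nonneg
        intro i _
        split
        · exact hpr_nonneg i
        · exact le_rfl
      ic := by
        intro v w hv hw
        rw [← Finset.sum_sub_distrib, ← Finset.sum_sub_distrib]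
        apply Finset.sum_le_sum
        intro i _
        by_cases h1 : pr i ≤ v i <;> by_cases h2 : pr i ≤ w i <;>
          simp [h1, h2] <;> linarith
      ir := by
        intro v hv
        rw [← Finset.sum_sub_distrib]
        apply Finset.sum_nonneg
        intro i _
        by_cases h1 : pr i ≤ v i <;> simp [h1] <;> linarith
    }
    have hpay_eq : ∀ v, M₀.pay v = ∑ i, (if pr i ≤ v i then pr i else 0) := fun v => rfl
    have hM0rev : 1 ≤ mrevM M₀ (Measure.pi Fs) := by
      have h1 : mrevM M₀ (Measure.pi Fs)
          = (1/τ) * M₀.pay (e τ) + (1 - 1/τ) * M₀.pay (e 0) := hint M₀.pay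
      have h2 : τ ≤ M₀.pay (e τ) := by
        rw [hpay_eq]
        have hterm : ∀ i ∈ Finset.univ, (0:ℝ) ≤ (if pr i ≤ e τ i then pr i else 0) := by
          intro i _
          split
          · exact hpr_nonneg i
          · exact le_rfl
        have hj : (if pr j₀ ≤ e τ j₀ then pr j₀ else 0) = τ := by
          rw [hpr, if_pos le_rfl, hEj]
        calc τ = (if pr j₀ ≤ e τ j₀ then pr j₀ else 0) := hj.symm
        _ ≤ ∑ i, (if pr i ≤ e τ i then pr i else 0) :=
          Finset.single_le_sum hterm (Finset.mem_univ j₀)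
      have h3 : 0 ≤ M₀.pay (e 0) := M₀.pay_nonneg _
      rw [h1]
      have h5 : (1/τ) * τ ≤ (1/τ) * M₀.pay (e τ) := mul_le_mul_of_nonneg_left h2 hinv0.le
      have h4 : (1/τ) * τ = 1 := by field_simp
      have h6 : 0 ≤ (1 - 1/τ) * M₀.pay (e 0) := mul_nonneg (by linarith) h3
      linarith
    have hBddA : BddAbove (Set.range fun M' : TruthfulMech m => mrevM M' (Measure.pi Fs)) := by
      refine ⟨τ + (m:ℝ)*δ, ?_⟩
      rintro z ⟨M', rfl⟩
      have h1 : mrevM M' (Measure.pi Fs)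
          = (1/τ) * M'.pay (e τ) + (1 - 1/τ) * M'.pay (e 0) := hint M'.pay
      have h2 : M'.pay (e τ) ≤ τ + (m:ℝ)*δ := by
        have := hpayle M' (e τ) (he_nonneg τ (by linarith))
        rw [hesum] at this
        linarith [hδ0]
      have h3 : M'.pay (e 0) ≤ τ + (m:ℝ)*δ := by
        have := hpayle M' (e 0) (he_nonneg 0 le_rfl)
        rw [hesum] at this
        linarith [hδ0, hτ0]
      show mrevM M' (Measure.pi Fs) ≤ τ + (m:ℝ)*δ
      rw [h1]
      have hA := mul_le_mul_of_nonneg_left h2 hinv0.le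
      have hB := mul_le_mul_of_nonneg_left h3 (by linarith : (0:ℝ) ≤ 1 - 1/τ)
      have hC : (1/τ)*(τ+(m:ℝ)*δ) + (1-1/τ)*(τ+(m:ℝ)*δ) = τ+(m:ℝ)*δ := by ring
      linarith
    have hopt : mrevM M₀ (Measure.pi Fs) ≤ optM m (Measure.pi Fs) := le_ciSup hBddA M₀
    have hgoal : c * mrevM M (Measure.pi Fs) ≤ 1 := by
      rw [hmrev]
      exact hfinal
    calc (1 - ε + Real.log (1 + rmax ^ 2)) * mrevM M (Measure.pi Fs)
        = c * mrevM M (Measure.pi Fs) := by rw [hcdef, hLdef, hBdef]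
    _ ≤ 1 := hgoal
    _ ≤ mrevM M₀ (Measure.pi Fs) := hM0rev
    _ ≤ optM m (Measure.pi Fs) := hopt
end

section
/- Let λ ∈ (0,1) and let F be a continuous probability distribution supported on an interval D ⊆ [0,∞), with density f positive on D, finite mean μ, and such that the λ-generalized virtual valuation φ_λ(x) = λx − (1−F(x))/f(x) is nondecreasing on D (F is λ-regular). Then posting the mean as a price is a (1−λ)^{−1/λ}-approximation to the optimal revenue: OPT(F) ≤ (1−λ)^{−1/λ} · μ · P_{X∼F}(X ≥ μ). -/
open MeasureTheory

open Set intervalIntegral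
open scoped ENNReal

/-- Derivative of the Pareto-type boundary function. -/
lemma hasDerivAt_wfun {l Ba C a : ℝ} (hl0 : 0 < l) {x : ℝ} (hBx : 0 < Ba + l * (x - a)) :
    HasDerivAt (fun y => C * (Ba + l * (y - a)) ^ (-(1/l)))
      (-(C * (Ba + l * (x - a)) ^ (-(1/l)) / (Ba + l * (x - a)))) x := by
  have haff : HasDerivAt (fun y : ℝ => Ba + l * (y - a)) l x := by
    simpa using (((hasDerivAt_id x).sub_const a).const_mul l).const_add Ba
  have hrpow : HasDerivAt (fun t : ℝ => t ^ (-(1/l)))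
      ((-(1/l)) * (Ba + l * (x - a)) ^ (-(1/l) - 1)) (Ba + l * (x - a)) :=
    Real.hasDerivAt_rpow_const (Or.inl hBx.ne')
  have := (hrpow.comp x haff).const_mul C
  refine this.congr_deriv ?_
  symm
  have h1 : (Ba + l * (x - a)) ^ (-(1/l) - 1)
      = (Ba + l * (x - a)) ^ (-(1/l)) / (Ba + l * (x - a)) :=
    Real.rpow_sub_one hBx.ne' _
  rw [h1]
  have hll : 1 / l * l = 1 := by field_simp
  linear_combination (C * ((Ba + l * (x - a)) ^ (-(1 / l)) / (Ba + l * (x - a)))) * hll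

/-- Grönwall-type comparison to the right: if `u' = -f ≤ -u/B` with `B` affine of slope `l`,
then `u` decays at least like `B^(-1/l)`. -/
lemma compare_right {l : ℝ} (hl0 : 0 < l) {u f : ℝ → ℝ} {a b Ba : ℝ} (hab : a ≤ b)
    (hBa : 0 < Ba)
    (hu_cont : ContinuousOn u (Icc a b))
    (hu_anti : AntitoneOn u (Icc a b))
    (hu_nonneg : ∀ x ∈ Icc a b, 0 ≤ u x)
    (hfi : IntegrableOn f (Icc a b))
    (hsum : ∀ s ∈ Icc a b, ∀ t ∈ Icc a b, s ≤ t → u t - u s = -∫ x in s..t, f x)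
    (hfB : ∀ x ∈ Icc a b, u x / (Ba + l * (x - a)) ≤ f x) :
    u b * (Ba + l * (b - a)) ^ (1/l) ≤ u a * Ba ^ (1/l) := by
  set B : ℝ → ℝ := fun x => Ba + l * (x - a) with hBdef
  have hBpos : ∀ x ∈ Icc a b, 0 < B x := fun x hx => by
    have : 0 ≤ l * (x - a) := mul_nonneg hl0.le (by linarith [hx.1])
    simp only [hBdef]; linarith
  have hBmono : MonotoneOn B (Icc a b) := fun x hx y hy hxy => by
    simp only [hBdef]; nlinarith [hl0.le]
  have hBcont : ContinuousOn B (Icc a b) :=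
    (continuous_const.add (continuous_const.mul (continuous_id.sub continuous_const))).continuousOn
  set w : ℝ → ℝ := fun x => (u a * Ba ^ (1/l)) * B x ^ (-(1/l)) with hwdef
  have hwa : w a = u a := by
    have hBa' : B a = Ba := by simp [hBdef]
    simp only [hwdef, hBa', mul_assoc, ← Real.rpow_add hBa, add_neg_cancel, Real.rpow_zero,
      mul_one]
  have hwderiv : ∀ x ∈ Icc a b, HasDerivAt w (-(w x / B x)) x := fun x hx =>
    hasDerivAt_wfun hl0 (hBpos x hx)
  have hwcont : ContinuousOn w (Icc a b) :=
    fun x hx => ((hwderiv x hx).continuousAt).continuousWithinAt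
  have key : ∀ ε > (0:ℝ), u b ≤ w b + ε * (b - a) := by
    intro ε hε
    have main := image_le_of_liminf_slope_right_lt_deriv_boundary'
      (f := u) (f' := fun x => -(u x / B x)) (a := a) (b := b)
      hu_cont
      ?_ (B := fun x => w x + ε * (x - a)) (B' := fun x => -(w x / B x) + ε)
      (by simp [hwa]) ?_ ?_ ?_ (right_mem_Icc.2 hab)
    · exact main
    · -- liminf slope condition
      intro x hx r hr
      have hxI : x ∈ Icc a b := Ico_subset_Icc_self hx
      have hxb : x < b := hx.2
      have hgc : ContinuousWithinAt (fun z => -(u z / B z)) (Icc a b) x :=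
        ((hu_cont x hxI).div (hBcont x hxI) (hBpos x hxI).ne').neg
      have htend : Filter.Tendsto (fun z => -(u z / B z)) (nhdsWithin x (Ioc x b))
          (nhds (-(u x / B x))) :=
        hgc.tendsto.mono_left (nhdsWithin_mono x (fun z hz => ⟨le_trans hxI.1 hz.1.le, hz.2⟩))
      have hev1 : ∀ᶠ z in nhdsWithin x (Ioc x b), -(u z / B z) < r :=
        htend.eventually_lt_const hr
      have hev2 : ∀ᶠ z in nhdsWithin x (Ioc x b), slope u x z < r := by
        filter_upwards [hev1, self_mem_nhdsWithin] with z hz hzI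
        refine lt_of_le_of_lt ?_ hz
        have hxz : x < z := hzI.1
        have hzb : z ∈ Icc a b := ⟨le_trans hxI.1 hxz.le, hzI.2⟩
        have hsub : Icc x z ⊆ Icc a b := Icc_subset_Icc hxI.1 hzI.2
        have hintf : IntervalIntegrable f volume x z := by
          rw [intervalIntegrable_iff_integrableOn_Icc_of_le hxz.le]
          exact hfi.mono_set hsub
        have hmono : ∀ t ∈ Icc x z, u z / B z ≤ f t := by
          intro t ht
          have htI : t ∈ Icc a b := hsub ht
          have h3 : u z / B z ≤ u t / B t :=
            div_le_div₀ (hu_nonneg t htI) (hu_anti htI hzb ht.2) (hBpos t htI)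
              (hBmono htI hzb ht.2)
          exact le_trans h3 (hfB t htI)
        have hlow : (z - x) * u z / B z ≤ ∫ t in x..z, f t := by
          have hc : IntervalIntegrable (fun _ => u z / B z) volume x z :=
            intervalIntegrable_const
          have := intervalIntegral.integral_mono_on hxz.le hc hintf hmono
          simpa [div_mul_eq_mul_div] using this
        have hsl : slope u x z = (u z - u x) / (z - x) := slope_def_field u x z
        rw [hsl, hsum x hxI z hzb hxz.le, div_le_iff₀ (by linarith : (0:ℝ) < z - x),
          show -(u z / B z) * (z - x) = -((z - x) * u z / B z) by ring]
        linarith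
      rw [nhdsWithin_Ioc_eq_nhdsGT hxb] at hev2
      exact hev2.frequently
    · exact hwcont.add (by fun_prop)
    · intro x hx
      have := (hwderiv x (Ico_subset_Icc_self hx)).add
        (((hasDerivAt_id x).sub_const a).const_mul ε)
      simpa [mul_one, Pi.add_def, Pi.neg_def] using this.hasDerivWithinAt
    · intro x hx heq
      have hxI : x ∈ Icc a b := Ico_subset_Icc_self hx
      have hwx : w x ≤ u x := by
        have : (0:ℝ) ≤ ε * (x - a) := mul_nonneg hε.le (by linarith [hx.1])
        linarith
      have h2 : w x / B x ≤ u x / B x := (div_le_div_iff_of_pos_right (hBpos x hxI)).2 hwx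
      linarith
  have hub : u b ≤ w b := by
    refine le_of_forall_pos_le_add (fun δ hδ => ?_)
    have hd : (0:ℝ) < δ / (b - a + 1) := div_pos hδ (by linarith)
    have h1 := key _ hd
    have h2 : δ / (b - a + 1) * (b - a) ≤ δ := by
      rw [div_mul_eq_mul_div, div_le_iff₀ (by linarith : (0:ℝ) < b - a + 1)]
      nlinarith
    linarith
  have hBb : 0 < B b := hBpos b (right_mem_Icc.2 hab)
  have := mul_le_mul_of_nonneg_right hub (Real.rpow_nonneg hBb.le (1/l))
  calc u b * (Ba + l * (b - a)) ^ (1/l) = u b * B b ^ (1/l) := rfl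
    _ ≤ w b * B b ^ (1/l) := this
    _ = u a * Ba ^ (1/l) := by
        simp only [hwdef, mul_assoc, ← Real.rpow_add hBb, neg_add_cancel, Real.rpow_zero,
          mul_one]

/-- Grönwall-type comparison to the left (lower bound): if `u' = -f ≥ -u/B`,
then `u` decays at most like `B^(-1/l)`. -/
lemma compare_left {l : ℝ} (hl0 : 0 < l) {u f : ℝ → ℝ} {a b Ba : ℝ} (hab : a ≤ b)
    (hBa : 0 < Ba)
    (hu_cont : ContinuousOn u (Icc a b))
    (hu_anti : AntitoneOn u (Icc a b))
    (hu_nonneg : ∀ x ∈ Icc a b, 0 ≤ u x)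
    (hfi : IntegrableOn f (Icc a b))
    (hsum : ∀ s ∈ Icc a b, ∀ t ∈ Icc a b, s ≤ t → u t - u s = -∫ x in s..t, f x)
    (hfB : ∀ x ∈ Icc a b, f x ≤ u x / (Ba + l * (x - a))) :
    u a * Ba ^ (1/l) ≤ u b * (Ba + l * (b - a)) ^ (1/l) := by
  set B : ℝ → ℝ := fun x => Ba + l * (x - a) with hBdef
  have hBpos : ∀ x ∈ Icc a b, 0 < B x := fun x hx => by
    have : 0 ≤ l * (x - a) := mul_nonneg hl0.le (by linarith [hx.1])
    simp only [hBdef]; linarith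
  have hBmono : MonotoneOn B (Icc a b) := fun x hx y hy hxy => by
    simp only [hBdef]; nlinarith [hl0.le]
  set w : ℝ → ℝ := fun x => (u a * Ba ^ (1/l)) * B x ^ (-(1/l)) with hwdef
  have hwa : w a = u a := by
    have hBa' : B a = Ba := by simp [hBdef]
    simp only [hwdef, hBa', mul_assoc, ← Real.rpow_add hBa, add_neg_cancel, Real.rpow_zero,
      mul_one]
  have hwderiv : ∀ x ∈ Icc a b, HasDerivAt w (-(w x / B x)) x := fun x hx =>
    hasDerivAt_wfun hl0 (hBpos x hx)
  have hwcont : ContinuousOn w (Icc a b) :=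
    fun x hx => ((hwderiv x hx).continuousAt).continuousWithinAt
  have key : ∀ ε > (0:ℝ), -(u b) ≤ -(w b) + ε * (b - a) := by
    intro ε hε
    have main := image_le_of_liminf_slope_right_lt_deriv_boundary'
      (f := fun x => -(u x)) (f' := fun x => u x / B x) (a := a) (b := b)
      hu_cont.neg
      ?_ (B := fun x => -(w x) + ε * (x - a)) (B' := fun x => w x / B x + ε)
      (by simp [hwa]) ?_ ?_ ?_ (right_mem_Icc.2 hab)
    · exact main
    · intro x hx r hr
      have hxI : x ∈ Icc a b := Ico_subset_Icc_self hx
      have hxb : x < b := hx.2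
      have hev2 : ∀ᶠ z in nhdsWithin x (Ioc x b), slope (fun y => -(u y)) x z < r := by
        filter_upwards [self_mem_nhdsWithin] with z hzI
        refine lt_of_le_of_lt ?_ hr
        have hxz : x < z := hzI.1
        have hzb : z ∈ Icc a b := ⟨le_trans hxI.1 hxz.le, hzI.2⟩
        have hsub : Icc x z ⊆ Icc a b := Icc_subset_Icc hxI.1 hzI.2
        have hintf : IntervalIntegrable f volume x z := by
          rw [intervalIntegrable_iff_integrableOn_Icc_of_le hxz.le]
          exact hfi.mono_set hsub
        have hmono : ∀ t ∈ Icc x z, f t ≤ u x / B x := by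
          intro t ht
          have htI : t ∈ Icc a b := hsub ht
          have h3 : u t / B t ≤ u x / B x :=
            div_le_div₀ (hu_nonneg x hxI) (hu_anti hxI htI ht.1) (hBpos x hxI)
              (hBmono hxI htI ht.1)
          exact le_trans (hfB t htI) h3
        have hup : ∫ t in x..z, f t ≤ (z - x) * u x / B x := by
          have hc : IntervalIntegrable (fun _ => u x / B x) volume x z :=
            intervalIntegrable_const
          have := intervalIntegral.integral_mono_on hxz.le hintf hc hmono
          simpa using this
        have hsl : slope (fun y => -(u y)) x z = (-(u z) - -(u x)) / (z - x) :=
          slope_def_field _ x z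
        have hz2 : u z - u x = -∫ t in x..z, f t := hsum x hxI z hzb hxz.le
        rw [hsl, div_le_iff₀ (by linarith : (0:ℝ) < z - x)]
        have : -(u z) - -(u x) = ∫ t in x..z, f t := by linarith
        rw [this]
        calc ∫ t in x..z, f t ≤ (z - x) * u x / B x := hup
          _ = u x / B x * (z - x) := by ring
      rw [nhdsWithin_Ioc_eq_nhdsGT hxb] at hev2
      exact hev2.frequently
    · exact hwcont.neg.add (by fun_prop)
    · intro x hx
      have := ((hwderiv x (Ico_subset_Icc_self hx)).neg).add
        (((hasDerivAt_id x).sub_const a).const_mul ε)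
      simpa [mul_one, Pi.add_def, Pi.neg_def] using this.hasDerivWithinAt
    · intro x hx heq
      have hxI : x ∈ Icc a b := Ico_subset_Icc_self hx
      have hwx : u x ≤ w x := by
        have : (0:ℝ) ≤ ε * (x - a) := mul_nonneg hε.le (by linarith [hx.1])
        linarith
      have h2 : u x / B x ≤ w x / B x := (div_le_div_iff_of_pos_right (hBpos x hxI)).2 hwx
      linarith
  have hub : w b ≤ u b := by
    have h := le_of_forall_pos_le_add (a := w b) (b := u b) (fun δ hδ => ?_)
    · exact h
    · have hd : (0:ℝ) < δ / (b - a + 1) := div_pos hδ (by linarith)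
      have h1 := key _ hd
      have h2 : δ / (b - a + 1) * (b - a) ≤ δ := by
        rw [div_mul_eq_mul_div, div_le_iff₀ (by linarith : (0:ℝ) < b - a + 1)]
        nlinarith
      linarith
  have hBb : 0 < B b := hBpos b (right_mem_Icc.2 hab)
  have h3 := mul_le_mul_of_nonneg_right hub (Real.rpow_nonneg hBb.le (1/l))
  calc u a * Ba ^ (1/l) = w b * B b ^ (1/l) := by
        simp only [hwdef, mul_assoc, ← Real.rpow_add hBb, neg_add_cancel, Real.rpow_zero,
          mul_one]
    _ ≤ u b * (Ba + l * (b - a)) ^ (1/l) := h3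

lemma hasDerivAt_affrpow {l Ba C a p : ℝ} {x : ℝ} (hBx : 0 < Ba + l * (x - a)) :
    HasDerivAt (fun y => C * (Ba + l * (y - a)) ^ p)
      (C * (p * (Ba + l * (x - a)) ^ (p - 1) * l)) x := by
  have haff : HasDerivAt (fun y : ℝ => Ba + l * (y - a)) l x := by
    simpa using (((hasDerivAt_id x).sub_const a).const_mul l).const_add Ba
  have hrpow : HasDerivAt (fun t : ℝ => t ^ p)
      (p * (Ba + l * (x - a)) ^ (p - 1)) (Ba + l * (x - a)) :=
    Real.hasDerivAt_rpow_const (Or.inl hBx.ne')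
  simpa [mul_assoc] using (hrpow.comp x haff).const_mul C

set_option maxHeartbeats 1600000 in
/-- Let `λ ∈ (0,1)` and let `G` be a continuous probability distribution
supported on an interval `D ⊆ [0,∞)` with density `f` positive on `D`, finite mean `μ`, and
nondecreasing `λ`-generalized virtual valuation `φ_λ(x) = λx − (1−F(x))/f(x)` on `D`
(`λ`-regularity). Then posting the mean as a price is a `(1−λ)^{−1/λ}`-approximation to the
optimal revenue: `OPT(G) ≤ (1−λ)^{−1/λ} · μ · P_{X∼G}(X ≥ μ)`. -/
theorem stmt18 (l : ℝ) (hl : l ∈ Set.Ioo (0 : ℝ) 1)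
    (D : Set ℝ) (hDmeas : MeasurableSet D) (hD0 : D ⊆ Set.Ici 0) (hDconn : D.OrdConnected)
    (f : ℝ → ℝ) (hf : Measurable f) (hfpos : ∀ x ∈ D, 0 < f x) (hfzero : ∀ x ∉ D, f x = 0)
    (G : Measure ℝ) (hG : G = MeasureTheory.volume.withDensity fun x => ENNReal.ofReal (f x))
    (hGprob : IsProbabilityMeasure G)
    (μ : ℝ) (hint : Integrable (fun x => x) G) (hmean : ∫ x, x ∂G = μ)
    (hreg : ∀ x ∈ D, ∀ y ∈ D, x ≤ y →
      l * x - (1 - (G (Set.Iic x)).toReal) / f x ≤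
        l * y - (1 - (G (Set.Iic y)).toReal) / f y) :
    opt G ≤ (1 - l) ^ (-(1 / l)) * (μ * (G (Set.Ici μ)).toReal) := by
  obtain ⟨h0l, hl1⟩ := hl
  have h1l : (0:ℝ) < 1 - l := by linarith
  have hGuniv : G Set.univ = 1 := hGprob.measure_univ
  have hfnn : ∀ x, 0 ≤ f x := fun x => by
    by_cases hx : x ∈ D
    · exact (hfpos x hx).le
    · rw [hfzero x hx]
  -- G is absolutely continuous wrt volume
  have hac : G ≪ volume := hG ▸ withDensity_absolutelyContinuous _ _
  -- basic null sets
  have hGnullD : ∀ s : Set ℝ, MeasurableSet s → (∀ x ∈ s, x ∉ D) → G s = 0 := by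
    intro s hs hsD
    rw [hG, withDensity_apply _ hs]
    have hz : ∀ x ∈ s, ENNReal.ofReal (f x) = 0 := fun x hx => by
      rw [hfzero x (hsD x hx), ENNReal.ofReal_zero]
    rw [setLIntegral_congr_fun hs hz]
    simp
  -- survival function
  set u : ℝ → ℝ := fun t => (G (Set.Ici t)).toReal with hudef
  have hu_le_one : ∀ t, u t ≤ 1 := fun t => by
    have := measure_mono (subset_univ (Set.Ici t)) (μ := G)
    rw [hGuniv] at this
    simpa [hudef] using ENNReal.toReal_mono (by norm_num) this
  have hu_nonneg : ∀ t, 0 ≤ u t := fun t => ENNReal.toReal_nonneg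
  have hu_anti : Antitone u := fun s t hst => by
    exact ENNReal.toReal_mono (measure_ne_top G _) (measure_mono (Set.Ici_subset_Ici.2 hst))
  -- f is integrable
  have hfint : Integrable f volume := by
    refine ⟨hf.aestronglyMeasurable, (hasFiniteIntegral_iff_ofReal
      (Filter.Eventually.of_forall hfnn)).2 ?_⟩
    have : ∫⁻ x, ENNReal.ofReal (f x) = G Set.univ := by
      rw [hG, withDensity_apply _ MeasurableSet.univ, setLIntegral_univ]
    rw [this, hGuniv]
    exact ENNReal.one_lt_top
  -- integral identity for u
  have hGIco : ∀ s t : ℝ, s ≤ t → (G (Set.Ico s t)).toReal = ∫ x in s..t, f x := by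
    intro s t hst
    have h1 : G (Set.Ico s t) = ∫⁻ x in Set.Ico s t, ENNReal.ofReal (f x) := by
      rw [hG, withDensity_apply _ measurableSet_Ico]
    have h2 : ENNReal.ofReal (∫ x in Set.Ico s t, f x) = ∫⁻ x in Set.Ico s t, ENNReal.ofReal (f x) :=
      ofReal_integral_eq_lintegral_ofReal hfint.integrableOn
        (Filter.Eventually.of_forall hfnn)
    rw [h1, ← h2, ENNReal.toReal_ofReal (integral_nonneg hfnn),
      intervalIntegral.integral_of_le hst, integral_Ico_eq_integral_Ioo,
      integral_Ioc_eq_integral_Ioo]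
  have hsum : ∀ s t : ℝ, s ≤ t → u t - u s = -∫ x in s..t, f x := by
    intro s t hst
    have hdisj : Disjoint (Set.Ico s t) (Set.Ici t) := by
      refine Set.disjoint_left.2 (fun x hx1 hx2 => ?_)
      exact absurd (lt_of_lt_of_le hx1.2 hx2) (lt_irrefl x)
    have hunion : Set.Ico s t ∪ Set.Ici t = Set.Ici s := Set.Ico_union_Ici_eq_Ici hst
    have hadd : G (Set.Ici s) = G (Set.Ico s t) + G (Set.Ici t) := by
      rw [← hunion, measure_union hdisj measurableSet_Ici]
    have := congrArg ENNReal.toReal hadd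
    rw [ENNReal.toReal_add (measure_ne_top G _) (measure_ne_top G _)] at this
    have h2 := hGIco s t hst
    simp only [hudef]
    rw [this, h2]
    ring
  have hu_cont : Continuous u := by
    have hform : ∀ t : ℝ, u t = u 0 - ∫ x in (0:ℝ)..t, f x := by
      intro t
      rcases le_total 0 t with h | h
      · have := hsum 0 t h; linarith
      · have := hsum t 0 h
        rw [intervalIntegral.integral_symm] at this
        linarith
    have : Continuous fun t => u 0 - ∫ x in (0:ℝ)..t, f x :=
      continuous_const.sub (hfint.continuous_primitive 0)
    exact (funext hform : u = _) ▸ this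
  -- Iic vs survival
  have huIic : ∀ x : ℝ, 1 - (G (Set.Iic x)).toReal = u x := by
    intro x
    have hdisj : Disjoint (Set.Iic x) (Set.Ioi x) := Set.Iic_disjoint_Ioi le_rfl
    have hunion : Set.Iic x ∪ Set.Ioi x = Set.univ := Set.Iic_union_Ioi
    have hadd : (1:ℝ≥0∞) = G (Set.Iic x) + G (Set.Ioi x) := by
      rw [← hGuniv, ← hunion, measure_union hdisj measurableSet_Ioi]
    have hx0 : G {x} = 0 := hac (Real.volume_singleton)
    have hIciIoi : G (Set.Ici x) = G (Set.Ioi x) :=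
      (measure_congr (MeasureTheory.Ioi_ae_eq_Ici' hx0)).symm
    have := congrArg ENNReal.toReal hadd
    rw [ENNReal.toReal_add (measure_ne_top G _) (measure_ne_top G _), ENNReal.toReal_one] at this
    simp only [hudef]
    rw [hIciIoi]
    linarith
  -- regularity in survival form
  have hreg' : ∀ x ∈ D, ∀ y ∈ D, x ≤ y → u y / f y ≤ u x / f x + l * (y - x) := by
    intro x hx y hy hxy
    have := hreg x hx y hy hxy
    rw [huIic x, huIic y] at this
    linarith
  -- a.e. nonneg
  have hGIio0 : G (Set.Iio 0) = 0 :=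
    hGnullD _ measurableSet_Iio (fun x hx hxD => absurd (hD0 hxD) (by simpa using hx))
  have hae : 0 ≤ᵐ[G] (fun x : ℝ => x) := by
    refine (ae_iff ..).2 ?_
    simpa [← Set.Iio_def] using hGIio0
  have hμnn : 0 ≤ μ := hmean ▸ integral_nonneg_of_ae hae
  -- points of D on both sides of μ
  have hatom : G {μ} = 0 := hac Real.volume_singleton
  have hnotae : ¬ (∀ᵐ x ∂G, x = μ) := by
    intro hμae
    have h1 : G {x : ℝ | ¬ x = μ} = 0 := (ae_iff).1 hμae
    have hcover : (Set.univ : Set ℝ) = {x : ℝ | ¬ x = μ} ∪ {μ} := by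
      ext y; by_cases h : y = μ <;> simp [h]
    have hz : G Set.univ = 0 := by
      refine le_antisymm ?_ zero_le
      rw [hcover]
      refine le_trans (measure_union_le _ _) ?_
      rw [h1, hatom]; simp
    rw [hGuniv] at hz
    exact one_ne_zero hz
  have hDlow : ∃ d ∈ D, d < μ := by
    by_contra hcon
    push_neg at hcon
    have hmono : ∀ᵐ x ∂G, μ ≤ x := by
      refine (ae_iff).2 ?_
      have hset : {x : ℝ | ¬ μ ≤ x} = Set.Iio μ := by ext y; simp [not_le]
      rw [hset]
      exact hGnullD _ measurableSet_Iio
        (fun x hx hxD => absurd (hcon x hxD) (not_le.2 hx))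
    have hintsub : Integrable (fun x : ℝ => x - μ) G := hint.sub (integrable_const μ)
    have hzero : ∫ x, (x - μ) ∂G = 0 := by
      rw [integral_sub hint (integrable_const μ), hmean, MeasureTheory.integral_const]
      simp [hGuniv]
    have hnn : 0 ≤ᵐ[G] fun x => x - μ := hmono.mono (fun x hx => by simp; linarith)
    have heq0 := (integral_eq_zero_iff_of_nonneg_ae hnn hintsub).1 hzero
    exact hnotae (heq0.mono (fun x hx => by simpa [sub_eq_zero] using hx))
  have hDhigh : ∃ d ∈ D, μ < d := by
    by_contra hcon
    push_neg at hcon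
    have hmono : ∀ᵐ x ∂G, x ≤ μ := by
      refine (ae_iff).2 ?_
      have hset : {x : ℝ | ¬ x ≤ μ} = Set.Ioi μ := by ext y; simp [not_le]
      rw [hset]
      exact hGnullD _ measurableSet_Ioi
        (fun x hx hxD => absurd (hcon x hxD) (not_le.2 hx))
    have hintsub : Integrable (fun x : ℝ => μ - x) G := (integrable_const μ).sub hint
    have hzero : ∫ x, (μ - x) ∂G = 0 := by
      rw [integral_sub (integrable_const μ) hint, hmean, MeasureTheory.integral_const]
      simp [hGuniv]
    have hnn : 0 ≤ᵐ[G] fun x => μ - x := hmono.mono (fun x hx => by simp; linarith)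
    have heq0 := (integral_eq_zero_iff_of_nonneg_ae hnn hintsub).1 hzero
    exact hnotae (heq0.mono (fun x hx => by
      have : μ - x = 0 := hx
      linarith))
  obtain ⟨d1, hd1D, hd1⟩ := hDlow
  obtain ⟨d2, hd2D, hd2⟩ := hDhigh
  have hμD : μ ∈ D := hDconn.out hd1D hd2D ⟨hd1.le, hd2.le⟩
  have hIccD : ∀ x ∈ D, ∀ y ∈ D, Set.Icc x y ⊆ D := fun x hx y hy => hDconn.out hx hy
  -- u μ > 0
  have huμpos : 0 < u μ := by
    have hsub : Set.Ico μ d2 ⊆ D := fun x hx => hIccD μ hμD d2 hd2D ⟨hx.1, hx.2.le⟩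
    have hpos : G (Set.Ico μ d2) ≠ 0 := by
      intro hzz
      rw [hG, withDensity_apply _ measurableSet_Ico] at hzz
      have hone := (lintegral_eq_zero_iff (hf.ennreal_ofReal)).1 hzz
      have hIvol : volume (Set.Ico μ d2) = 0 := by
        refine measure_mono_null ?_ ((ae_iff).1 ((ae_restrict_iff' measurableSet_Ico).1 hone))
        intro x hx
        simp only [Set.mem_setOf_eq, Classical.not_imp]
        exact ⟨hx, by simp [ENNReal.ofReal_eq_zero, not_le, hfpos x (hsub hx)]⟩
      rw [Real.volume_Ico] at hIvol
      rw [ENNReal.ofReal_eq_zero] at hIvol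
      linarith
    have hle : G (Set.Ico μ d2) ≤ G (Set.Ici μ) := measure_mono Set.Ico_subset_Ici_self
    have : G (Set.Ici μ) ≠ 0 := fun h => hpos (le_antisymm (h ▸ hle) zero_le)
    simp only [hudef]
    exact ENNReal.toReal_pos this (measure_ne_top G _)
  -- OPT ≤ μ
  have hopt : opt G ≤ μ := by
    rw [opt]
    refine Real.iSup_le (fun p => Real.iSup_le (fun hp => ?_) hμnn) hμnn
    rw [rev]
    have hp0 : (0:ℝ) ≤ p := hp
    calc p * (G (Set.Ici p)).toReal = ∫ _ in Set.Ici p, p ∂G := by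
          rw [setIntegral_const, smul_eq_mul, measureReal_def]; ring
      _ ≤ ∫ x in Set.Ici p, x ∂G := by
          refine setIntegral_mono_on (integrableOn_const (measure_ne_top G _))
            hint.integrableOn measurableSet_Ici (fun x hx => hx)
      _ ≤ ∫ x, x ∂G := setIntegral_le_integral hint hae
      _ = μ := hmean
  -- KEY : (1-l)^(1/l) ≤ u μ
  have hkey : (1-l) ^ (1/l) ≤ u μ := by
    by_contra hcon
    push_neg at hcon
    set β := u μ with hβdef
    have hβpos : 0 < β := huμpos
    have hβl : β ^ l < 1 - l := by
      have h1 : β ^ l < ((1-l) ^ (1/l)) ^ l := Real.rpow_lt_rpow hβpos.le hcon h0l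
      rwa [← Real.rpow_mul h1l.le, one_div,
        inv_mul_cancel₀ h0l.ne', Real.rpow_one] at h1
    have hβl_pos : 0 < β ^ l := Real.rpow_pos_of_pos hβpos l
    have hβl1 : β ^ l < 1 := by linarith
    have hfμ : 0 < f μ := hfpos μ hμD
    set h := u μ / f μ with hhdef
    have hh : 0 < h := div_pos huμpos hfμ
    set B : ℝ → ℝ := fun t => h + l * (t - μ) with hBdef
    set w : ℝ → ℝ := fun t => β * h ^ (1/l) * (B t) ^ (-(1/l)) with hwdef
    -- comparison
    have hcomp : ∀ t ∈ D, 0 < B t → u t * (B t) ^ (1/l) ≤ β * h ^ (1/l) := by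
      intro t htD hBt
      rcases le_total μ t with hc | hc
      · have hIcc : Set.Icc μ t ⊆ D := hIccD μ hμD t htD
        have hfB : ∀ x ∈ Set.Icc μ t, u x / (h + l * (x - μ)) ≤ f x := by
          intro x hx
          have hxD : x ∈ D := hIcc hx
          have hmn : 0 ≤ l * (x - μ) := mul_nonneg h0l.le (sub_nonneg.2 hx.1)
          have hBx : 0 < h + l * (x - μ) := by linarith
          have h1 : u x / f x ≤ h + l * (x - μ) := by
            have h2 := hreg' μ hμD x hxD hx.1
            simp only [hhdef]
            linarith
          have h3 := (div_le_iff₀ (hfpos x hxD)).1 h1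
          exact (div_le_iff₀ hBx).2 (by linarith)
        have hcr := compare_right h0l hc hh hu_cont.continuousOn (hu_anti.antitoneOn _)
          (fun x _ => hu_nonneg x) hfint.integrableOn
          (fun s _ t' _ hst => hsum s t' hst) hfB
        simpa [hBdef, hβdef] using hcr
      · have hIcc : Set.Icc t μ ⊆ D := hIccD t htD μ hμD
        have hfB : ∀ x ∈ Set.Icc t μ, f x ≤ u x / (B t + l * (x - t)) := by
          intro x hx
          have hxD : x ∈ D := hIcc hx
          have hBeq : B t + l * (x - t) = h + l * (x - μ) := by simp only [hBdef]; ring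
          have hmn : 0 ≤ l * (x - t) := mul_nonneg h0l.le (sub_nonneg.2 hx.1)
          have hBx : 0 < B t + l * (x - t) := by linarith
          have h1 : h - l * (μ - x) ≤ u x / f x := by
            have h2 := hreg' x hxD μ hμD hx.2
            simp only [hhdef]
            linarith
          have h3 : B t + l * (x - t) ≤ u x / f x := by rw [hBeq]; linarith
          have h2 : (B t + l * (x - t)) * f x ≤ u x := (le_div_iff₀ (hfpos x hxD)).1 h3
          exact (le_div_iff₀ hBx).2 (by linarith)
        have hcl := compare_left h0l hc hBt hu_cont.continuousOn (hu_anti.antitoneOn _)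
          (fun x _ => hu_nonneg x) hfint.integrableOn
          (fun s _ t' _ hst => hsum s t' hst) hfB
        have hBeq2 : B t + l * (μ - t) = h := by simp only [hBdef]; ring
        rw [hBeq2] at hcl
        simpa [hβdef] using hcl
    have hcomp' : ∀ t ∈ D, 0 < B t → u t ≤ w t := by
      intro t htD hBt
      have h1 := hcomp t htD hBt
      have h2 := mul_le_mul_of_nonneg_right h1 (Real.rpow_nonneg hBt.le (-(1/l)))
      rw [mul_assoc, ← Real.rpow_add hBt, add_neg_cancel, Real.rpow_zero, mul_one] at h2
      simpa [hwdef, mul_assoc] using h2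
    -- the crossing point
    set c : ℝ := μ - h * (1 - β ^ l) / l with hcdef
    have hcμ : c < μ := by
      have : 0 < h * (1 - β ^ l) / l := div_pos (mul_pos hh (by linarith)) h0l
      simp only [hcdef]; linarith
    have hBc : B c = h * β ^ l := by
      simp only [hBdef, hcdef]; field_simp; ring
    have hBcpos : 0 < B c := by rw [hBc]; positivity
    have hBmono : ∀ s t : ℝ, s < t → B s < B t := fun s t hst => by
      simp only [hBdef]; nlinarith
    have hwc : w c = 1 := by
      simp only [hwdef]
      rw [hBc, Real.mul_rpow hh.le hβl_pos.le, ← Real.rpow_mul hβpos.le]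
      have he : l * (-(1/l)) = -1 := by field_simp
      rw [he, Real.rpow_neg_one]
      rw [show β * h ^ (1/l) * (h ^ (-(1/l)) * β⁻¹)
          = (h ^ (1/l) * h ^ (-(1/l))) * (β * β⁻¹) from by ring]
      rw [← Real.rpow_add hh, add_neg_cancel, Real.rpow_zero, mul_inv_cancel₀ hβpos.ne',
        one_mul]
    -- inf D ≤ c
    have hbdd : BddBelow D := ⟨0, fun x hx => hD0 hx⟩
    have hcD : sInf D ≤ c := by
      by_contra hlt
      push_neg at hlt
      set a := sInf D with hadef
      have haD : ∀ x, x < a → x ∉ D := fun x hx hxD => absurd (csInf_le hbdd hxD) (not_le.2 hx)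
      have hua : u a = 1 := by
        have hz : G (Set.Iio a) = 0 := hGnullD _ measurableSet_Iio (fun x hx => haD x hx)
        have hadd : G (Set.Iio a) + G (Set.Ici a) = 1 := by
          rw [← measure_union (Set.Iio_disjoint_Ici le_rfl) measurableSet_Ici,
            Set.Iio_union_Ici, hGuniv]
        rw [hz, zero_add] at hadd
        simp [hudef, hadd]
      have hBa : 0 < B a := lt_trans hBcpos (hBmono c a hlt)
      have hwalt : w a < 1 := by
        rw [← hwc]
        simp only [hwdef]
        have hm : (B a) ^ (-(1/l)) < (B c) ^ (-(1/l)) :=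
          Real.rpow_lt_rpow_of_neg hBcpos (hBmono c a hlt) (by simp [h0l])
        refine mul_lt_mul_of_pos_left hm ?_
        positivity
      have hBcont : Continuous B := by simp only [hBdef]; fun_prop
      have hwcont : ContinuousAt w a := by
        simp only [hwdef]
        exact continuousAt_const.mul
          ((Real.continuousAt_rpow_const _ _ (Or.inl hBa.ne')).comp hBcont.continuousAt)
      have hφ : Filter.Tendsto (fun t => u t - w t) (nhds a) (nhds (u a - w a)) :=
        (hu_cont.continuousAt.sub hwcont).tendsto
      have hpos : 0 < u a - w a := by rw [hua]; linarith
      have hevφ : ∀ᶠ t in nhds a, 0 < u t - w t := hφ.eventually_const_lt hpos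
      have hevB : ∀ᶠ t in nhds a, 0 < B t :=
        (hBcont.continuousAt.tendsto).eventually_const_lt hBa
      obtain ⟨δ, hδ, hball⟩ := Metric.eventually_nhds_iff.1 (hevφ.and hevB)
      obtain ⟨d0, hd0D, hd0lt⟩ := (csInf_lt_iff hbdd ⟨μ, hμD⟩).1
        ((lt_add_iff_pos_right _).2 hδ : sInf D < a + δ)
      have hd0ge : a ≤ d0 := csInf_le hbdd hd0D
      have hdist : dist d0 a < δ := by
        rw [Real.dist_eq, abs_of_nonneg (by linarith)]; linarith
      obtain ⟨hφ0, hB0⟩ := hball hdist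
      have := hcomp' d0 hd0D hB0
      linarith
    have hc0 : 0 ≤ c := le_trans (le_csInf ⟨μ, hμD⟩ (fun b hb => hD0 hb)) hcD
    -- pointwise bound above c
    have hbound : ∀ t, c < t → u t ≤ w t := by
      intro t hct
      have hBt : 0 < B t := lt_trans hBcpos (hBmono c t hct)
      by_cases htD : t ∈ D
      · exact hcomp' t htD hBt
      · obtain ⟨d0, hd0D, hd0⟩ := (csInf_lt_iff hbdd ⟨μ, hμD⟩).1 (lt_of_le_of_lt hcD hct)
        have hnone : ∀ x ∈ Set.Ici t, x ∉ D := by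
          intro x hx hxD
          exact htD (hIccD d0 hd0D x hxD ⟨hd0.le, hx⟩)
        have hz : G (Set.Ici t) = 0 := hGnullD _ measurableSet_Ici hnone
        have : u t = 0 := by simp [hudef, hz]
        rw [this]
        simp only [hwdef]
        positivity
    -- layer cake
    have hmeaslt : ∀ t : ℝ, G {a : ℝ | t < a} = G (Set.Ici t) := by
      intro t
      have hxt : G {t} = 0 := hac Real.volume_singleton
      exact measure_congr (MeasureTheory.Ioi_ae_eq_Ici' hxt)
    have hulayer : μ = ∫ t in Set.Ioi 0, u t := by
      have h1 := hint.integral_eq_integral_meas_lt hae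
      rw [hmean] at h1
      rw [h1]
      refine setIntegral_congr_fun measurableSet_Ioi (fun t ht => ?_)
      rw [measureReal_def, hmeaslt t]
    have hui : IntegrableOn u (Set.Ioi 0) := by
      refine ⟨hu_cont.aestronglyMeasurable.restrict, ?_⟩
      rw [hasFiniteIntegral_iff_ofReal (Filter.Eventually.of_forall (fun t => hu_nonneg t))]
      have h2 : ∫⁻ t in Set.Ioi 0, ENNReal.ofReal (u t) = ∫⁻ t in Set.Ioi 0, G {a : ℝ | t < a} := by
        refine lintegral_congr (fun t => ?_)
        rw [hmeaslt t]
        simp [hudef, ENNReal.ofReal_toReal (measure_ne_top G _)]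
      rw [h2, ← lintegral_eq_lintegral_meas_lt G hae hint.aemeasurable,
        ← ofReal_integral_eq_lintegral_ofReal hint hae]
      exact ENNReal.ofReal_lt_top
    -- tail integral bound
    set V : ℝ → ℝ := fun t => (β * h ^ (1/l) / (1-l)) * (B t) ^ (1 - 1/l) with hVdef
    have hVc : V c = h * β ^ l / (1-l) := by
      simp only [hVdef]
      rw [hBc, Real.mul_rpow hh.le hβl_pos.le, ← Real.rpow_mul hβpos.le]
      have he : l * (1 - 1/l) = l - 1 := by field_simp
      rw [he]
      rw [show β * h ^ (1/l) / (1-l) * (h ^ (1 - 1/l) * β ^ (l-1))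
          = (h ^ (1/l) * h ^ (1 - 1/l)) * (β ^ (1:ℝ) * β ^ (l-1)) / (1-l) from by
            rw [Real.rpow_one]; ring]
      rw [← Real.rpow_add hh, ← Real.rpow_add hβpos]
      norm_num
    have hVd : ∀ t, 0 < B t → HasDerivAt V (-(w t)) t := by
      intro t hBt
      have hgen := hasDerivAt_affrpow (l := l) (Ba := h) (a := μ)
        (C := β * h ^ (1/l) / (1-l)) (p := 1 - 1/l) (x := t) (by simpa [hBdef] using hBt)
      have hval : β * h ^ (1/l) / (1-l) * ((1 - 1/l) * (h + l * (t - μ)) ^ (1 - 1/l - 1) * l)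
          = -(w t) := by
        have he : 1 - 1/l - 1 = -(1/l) := by ring
        rw [he]
        have h4 : (1 - 1/l) * l = l - 1 := by field_simp
        rw [show β * h ^ (1/l) / (1-l) * ((1 - 1/l) * (h + l * (t - μ)) ^ (-(1/l)) * l)
            = β * h ^ (1/l) * (h + l * (t - μ)) ^ (-(1/l)) * (((1 - 1/l) * l) / (1-l)) from by
              ring]
        rw [h4, show l - 1 = -(1-l) from by ring, neg_div, div_self h1l.ne', hwdef]
        simp only [hBdef]
        ring
      rw [← hval]
      exact hgen
    have htail : ∫ t in Set.Ioi c, u t ≤ V c := by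
      have hVnn : ∀ t, 0 < B t → 0 ≤ V t := fun t hBt => by
        simp only [hVdef]; positivity
      have hBpos' : ∀ x, c ≤ x → 0 < B x := fun x hx => by
        rcases eq_or_lt_of_le hx with he | hlt
        · rw [← he]; exact hBcpos
        · exact lt_trans hBcpos (hBmono c x hlt)
      have hIoc : ∀ n : ℕ, ∫ t in Set.Ioc c (c + (n:ℝ)), u t ≤ V c := by
        intro n
        have hcn : c ≤ c + (n:ℝ) := le_add_of_nonneg_right (Nat.cast_nonneg n)
        have hwcontOn : ContinuousOn w (Set.Icc c (c + (n:ℝ))) := by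
          intro x hx
          have hca : ContinuousAt w x := by
            simp only [hwdef]
            exact continuousAt_const.mul
              ((Real.continuousAt_rpow_const _ _ (Or.inl (hBpos' x hx.1).ne')).comp
                (by simp only [hBdef]; fun_prop))
          exact hca.continuousWithinAt
        have hwint : IntegrableOn w (Set.Ioc c (c + (n:ℝ))) :=
          (hwcontOn.integrableOn_Icc).mono_set Set.Ioc_subset_Icc_self
        have hm : ∫ t in Set.Ioc c (c + (n:ℝ)), u t ≤ ∫ t in Set.Ioc c (c + (n:ℝ)), w t := by
          refine setIntegral_mono_on ?_ hwint measurableSet_Ioc (fun t ht => hbound t ht.1)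
          exact hui.mono_set (fun t ht => lt_of_le_of_lt hc0 ht.1)
        have hFTC : ∫ t in Set.Ioc c (c + (n:ℝ)), w t = V c - V (c + (n:ℝ)) := by
          rw [← intervalIntegral.integral_of_le hcn]
          have hderiv : ∀ x ∈ Set.uIcc c (c + (n:ℝ)), HasDerivAt (fun t => -(V t)) (w x) x := by
            intro x hx
            rw [Set.uIcc_of_le hcn] at hx
            simpa [Pi.neg_def] using (hVd x (hBpos' x hx.1)).neg
          have hwii : IntervalIntegrable w volume c (c + (n:ℝ)) := by
            rw [intervalIntegrable_iff_integrableOn_Ioc_of_le hcn]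
            exact hwint
          rw [intervalIntegral.integral_eq_sub_of_hasDerivAt hderiv hwii]
          ring
        have hBcn : 0 < B (c + (n:ℝ)) := hBpos' _ hcn
        rw [hFTC] at hm
        linarith [hVnn (c + (n:ℝ)) hBcn]
      have hmonoS : Monotone (fun n : ℕ => Set.Ioc c (c + (n:ℝ))) := fun m n hmn =>
        Set.Ioc_subset_Ioc le_rfl (by
          have : (m:ℝ) ≤ (n:ℝ) := Nat.cast_le.2 hmn
          linarith)
      have hUnion : ⋃ n : ℕ, Set.Ioc c (c + (n:ℝ)) = Set.Ioi c := by
        ext t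
        simp only [Set.mem_iUnion, Set.mem_Ioc, Set.mem_Ioi]
        constructor
        · rintro ⟨n, h1, _⟩; exact h1
        · intro ht
          obtain ⟨n, hn⟩ := exists_nat_ge (t - c)
          exact ⟨n, ht, by linarith⟩
      have hlim := tendsto_setIntegral_of_monotone (fun n : ℕ => measurableSet_Ioc) hmonoS
        (by rw [hUnion]; exact hui.mono_set (Set.Ioi_subset_Ioi hc0))
      rw [hUnion] at hlim
      exact le_of_tendsto' hlim hIoc
    -- split and contradiction
    have hsplit : μ ≤ c + V c := by
      rw [hulayer, ← Set.Ioc_union_Ioi_eq_Ioi hc0,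
        setIntegral_union (Set.Ioc_disjoint_Ioi le_rfl) measurableSet_Ioi
          (hui.mono_set Set.Ioc_subset_Ioi_self)
          (hui.mono_set (Set.Ioi_subset_Ioi hc0))]
      have h1 : ∫ t in Set.Ioc 0 c, u t ≤ c := by
        calc ∫ t in Set.Ioc 0 c, u t ≤ ∫ _ in Set.Ioc 0 c, (1:ℝ) := by
              refine setIntegral_mono_on (hui.mono_set Set.Ioc_subset_Ioi_self)
                (integrableOn_const (by rw [Real.volume_Ioc]; exact ENNReal.ofReal_ne_top))
                measurableSet_Ioc (fun t ht => hu_le_one t)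
          _ = c := by simp [Real.volume_Ioc, hc0]
      linarith [htail]
    have hfinal : h * β ^ l / (1-l) < h * (1 - β ^ l) / l := by
      rw [div_lt_div_iff₀ h1l h0l]
      nlinarith [mul_pos hh (show (0:ℝ) < 1 - l - β ^ l by linarith)]
    rw [hVc] at hsplit
    simp only [hcdef] at hsplit
    linarith
  -- final assembly
  have hCpos : (0:ℝ) < (1-l) ^ (1/l) := Real.rpow_pos_of_pos h1l _
  calc opt G ≤ μ := hopt
    _ ≤ (1 - l) ^ (-(1 / l)) * (μ * (G (Set.Ici μ)).toReal) := by
        rw [Real.rpow_neg h1l.le, ← div_eq_inv_mul, le_div_iff₀ hCpos]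
        calc μ * (1-l) ^ (1/l) ≤ μ * u μ := mul_le_mul_of_nonneg_left hkey hμnn
          _ = μ * (G (Set.Ici μ)).toReal * 1 := by rw [hudef, mul_one]
          _ = μ * (G (Set.Ici μ)).toReal := by ring
end

section
/- Let r > 0, let k be the unique positive real solution of 1/r = (3k + k³)/2, and set ρ̃ = 1/(1 − (3/2)·r·k). Then: (i) ρ̃ is the unique solution in [1,∞) of the equation (27/4)·r² = (ρ̃−1)³/ρ̃²; (ii) 1 + (27/4)·r² ≤ ρ̃ ≤ 3 + (27/4)·r²; and (iii) for any μ > 0 with σ = r·μ, the price p = μ − kσ satisfies p = ((ρ̃+2)/(3ρ̃))·μ. -/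
/-- Let `r > 0`, let `k` be the unique positive real solution of
`1/r = (3k + k³)/2`, and set `ρ̃ = 1/(1 − (3/2)·r·k)`. Then:
(i) `ρ̃` is the unique solution in `[1,∞)` of `(27/4)·r² = (ρ̃−1)³/ρ̃²`;
(ii) `1 + (27/4)·r² ≤ ρ̃ ≤ 3 + (27/4)·r²`;
(iii) for any `μ > 0` with `σ = r·μ`, the price `p = μ − kσ` satisfies
`p = ((ρ̃+2)/(3ρ̃))·μ`. -/
theorem stmt19 (r : ℝ) (hr : 0 < r) (k : ℝ) (hk : 0 < k)
    (hkeq : 1 / r = (3 * k + k ^ 3) / 2)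
    (ρ : ℝ) (hρ : ρ = 1 / (1 - (3 / 2) * r * k)) :
    (1 ≤ ρ ∧ (27 / 4) * r ^ 2 = (ρ - 1) ^ 3 / ρ ^ 2 ∧
      ∀ ρ' : ℝ, 1 ≤ ρ' → (27 / 4) * r ^ 2 = (ρ' - 1) ^ 3 / ρ' ^ 2 → ρ' = ρ) ∧
    (1 + (27 / 4) * r ^ 2 ≤ ρ ∧ ρ ≤ 3 + (27 / 4) * r ^ 2) ∧
    ∀ μ : ℝ, 0 < μ → μ - k * (r * μ) = ((ρ + 2) / (3 * ρ)) * μ := by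
  have hk2 : (0:ℝ) < k ^ 2 := by positivity
  have h3 : (0:ℝ) < 3 + k ^ 2 := by positivity
  have hr2 : r * (3 * k + k ^ 3) = 2 := by
    field_simp at hkeq
    linarith
  have hrk : r * k * (3 + k ^ 2) = 2 := by linear_combination hr2
  have hsub : 1 - 3 / 2 * r * k = k ^ 2 / (3 + k ^ 2) := by
    rw [eq_div_iff (ne_of_gt h3)]
    linear_combination (-(3:ℝ)/2) * hrk
  have hρval : ρ = (3 + k ^ 2) / k ^ 2 := by
    rw [hρ, hsub, one_div_div]
  have hρ1 : 1 < ρ := by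
    rw [hρval, lt_div_iff₀ hk2]
    linarith
  have hρpos : 0 < ρ := by linarith
  have heq : (27 / 4) * r ^ 2 = (ρ - 1) ^ 3 / ρ ^ 2 := by
    rw [hρval]
    field_simp
    linear_combination (27 * (r * k * (3 + k ^ 2) + 2)) * hrk
  refine ⟨⟨le_of_lt hρ1, heq, ?_⟩, ⟨?_, ?_⟩, ?_⟩
  · intro ρ' hρ'1 heq'
    have hc : 0 < (27/4) * r ^ 2 := by positivity
    have hρ'1' : 1 < ρ' := by
      rcases eq_or_lt_of_le hρ'1 with h | h
      · exfalso; rw [← h] at heq'; simp at heq'; linarith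
      · exact h
    have hcross : (ρ' - 1) ^ 3 * ρ ^ 2 = (ρ - 1) ^ 3 * ρ' ^ 2 := by
      have h1 : (ρ' - 1) ^ 3 / ρ' ^ 2 = (ρ - 1) ^ 3 / ρ ^ 2 := by rw [← heq, ← heq']
      field_simp at h1
      linarith
    by_contra hne
    have key : ∀ x y : ℝ, 1 < x → x < y →
        (x - 1) ^ 3 * y ^ 2 < (y - 1) ^ 3 * x ^ 2 := by
      intro x y hx hxy
      nlinarith [sq_nonneg (x*y - x - y), mul_pos (sub_pos.2 hx) (sub_pos.2 (hx.trans hxy)),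
        mul_pos (sub_pos.2 (hx.trans hxy)) (sub_pos.2 hxy), sq_nonneg (x - y),
        mul_pos (mul_pos (sub_pos.2 hx) (sub_pos.2 (hx.trans hxy))) (sub_pos.2 hxy)]
    rcases lt_or_gt_of_ne hne with h1 | h1
    · exact absurd hcross (ne_of_lt (key ρ' ρ hρ'1' h1))
    · exact absurd hcross.symm (ne_of_lt (key ρ ρ' hρ1 h1))
  · have h1 : (ρ - 1) ^ 3 / ρ ^ 2 ≤ ρ - 1 := by
      rw [div_le_iff₀ (by positivity)]
      nlinarith
    linarith [heq]
  · have h1 : ρ - 3 ≤ (ρ - 1) ^ 3 / ρ ^ 2 := by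
      rw [le_div_iff₀ (by positivity)]
      nlinarith
    linarith [heq]
  · intro μ hμ
    rw [hρval]
    field_simp
    ring_nf
    nlinarith [hrk, mul_pos hμ hk]
end
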